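/- arXiv:2512.01876 — 3 statements merged into one kernel-verified Lean document; each statement's English description precedes it below -/
import Mathlib

section
/- Let Σ_pk ⊆ ℝ^{n×n}×ℝ^{n×m}. There exist T ∈ ℕ and an input sequence u(0),…,u(T−1) ∈ ℝ^m that is Σ_pk-universal for stabilization if and only if Σ_pk ⊆ Σ_stab. -/
open Matrix

/-- A system: a pair `(A, B)` of real matrices of sizes `n × n` and `n × m`. -/
abbrev Sys (n m : ℕ) := Matrix (Fin n) (Fin n) ℝ × Matrix (Fin n) (Fin m) ℝ

/-- `(A, B)` is consistent with the input-state data `(u, x)` of length `T`. -/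
def Consistent {n m T : ℕ} (A : Matrix (Fin n) (Fin n) ℝ) (B : Matrix (Fin n) (Fin m) ℝ)
    (u : Fin T → Fin m → ℝ) (x : Fin (T + 1) → Fin n → ℝ) : Prop :=
  ∀ t : Fin T, x t.succ = A.mulVec (x t.castSucc) + B.mulVec (u t)

/-- The set `Σ_D` of systems consistent with the data `(u, x)`. -/
def SigmaD {n m T : ℕ} (u : Fin T → Fin m → ℝ) (x : Fin (T + 1) → Fin n → ℝ) :
    Set (Sys n m) :=
  {AB | Consistent AB.1 AB.2 u x}

/-- The matrix `X₋ = [x(0) ⋯ x(T-1)]`. -/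
def Xminus {n T : ℕ} (x : Fin (T + 1) → Fin n → ℝ) : Matrix (Fin n) (Fin T) ℝ :=
  Matrix.of fun i t => x t.castSucc i

/-- The matrix `X₊ = [x(1) ⋯ x(T)]`. -/
def Xplus {n T : ℕ} (x : Fin (T + 1) → Fin n → ℝ) : Matrix (Fin n) (Fin T) ℝ :=
  Matrix.of fun i t => x t.succ i

/-- The matrix `U₋ = [u(0) ⋯ u(T-1)]`. -/
def Uminus {m T : ℕ} (u : Fin T → Fin m → ℝ) : Matrix (Fin m) (Fin T) ℝ :=
  Matrix.of fun i t => u t i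

/-- The stacked matrix `[X₋; U₋]`. -/
def stacked {n m T : ℕ} (X : Matrix (Fin n) (Fin T) ℝ) (U : Matrix (Fin m) (Fin T) ℝ) :
    Matrix (Fin n ⊕ Fin m) (Fin T) ℝ :=
  Matrix.fromRows X U

/-- A real square matrix is Schur if all its complex eigenvalues have modulus `< 1`. -/
def Schur {n : ℕ} (M : Matrix (Fin n) (Fin n) ℝ) : Prop :=
  ∀ μ ∈ spectrum ℂ (M.map ((↑·) : ℝ → ℂ)), ‖μ‖ < 1

/-- The matrix `[C  AC  ⋯  A^{n-1}C]`. -/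
def reachMat {n : ℕ} (A : Matrix (Fin n) (Fin n) ℝ) {p : Type*} (C : Matrix (Fin n) p ℝ) :
    Matrix (Fin n) (Fin n × p) ℝ :=
  Matrix.of fun i q => (A ^ (q.1 : ℕ) * C) i q.2

/-- The column span of a matrix, as a submodule. -/
def colSpan {p : Type*} {q : Type*} [Fintype q] (M : Matrix p q ℝ) :
    Submodule ℝ (p → ℝ) :=
  LinearMap.range M.mulVecLin

/-- The reachable subspace `R(A, C)`: the column span of `[C AC ⋯ A^{n-1}C]`. -/
def Rspace {n : ℕ} (A : Matrix (Fin n) (Fin n) ℝ) {p : Type*} [Fintype p]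
    (C : Matrix (Fin n) p ℝ) : Submodule ℝ (Fin n → ℝ) :=
  colSpan (reachMat A C)

/-- `(A, B)` is controllable. -/
def Controllable {n m : ℕ} (A : Matrix (Fin n) (Fin n) ℝ) (B : Matrix (Fin n) (Fin m) ℝ) :
    Prop :=
  (reachMat A B).rank = n

/-- `(A, B)` is stabilizable. -/
def Stabilizable {n m : ℕ} (A : Matrix (Fin n) (Fin n) ℝ) (B : Matrix (Fin n) (Fin m) ℝ) :
    Prop :=
  ∃ K : Matrix (Fin m) (Fin n) ℝ, Schur (A + B * K)

/-- The set `Σ_cont` of controllable systems. -/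
def SigmaCont (n m : ℕ) : Set (Sys n m) := {AB | Controllable AB.1 AB.2}

/-- The set `Σ_stab` of stabilizable systems. -/
def SigmaStab (n m : ℕ) : Set (Sys n m) := {AB | Stabilizable AB.1 AB.2}

/-- Data `(u, x)` is `P`-informative for identification: `Σ_D ∩ P` is a singleton. -/
def InfId {n m T : ℕ} (P : Set (Sys n m)) (u : Fin T → Fin m → ℝ)
    (x : Fin (T + 1) → Fin n → ℝ) : Prop :=
  ∃ s : Sys n m, SigmaD u x ∩ P = {s}

/-- Data `(u, x)` is `P`-informative for stabilization. -/
def InfStab {n m T : ℕ} (P : Set (Sys n m)) (u : Fin T → Fin m → ℝ)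
    (x : Fin (T + 1) → Fin n → ℝ) : Prop :=
  ∃ K : Matrix (Fin m) (Fin n) ℝ, ∀ AB ∈ SigmaD u x ∩ P, Schur (AB.1 + AB.2 * K)

/-- An input is `P`-universal for identification. -/
def UnivId {n m T : ℕ} (P : Set (Sys n m)) (u : Fin T → Fin m → ℝ) : Prop :=
  ∀ AB ∈ P, ∀ x : Fin (T + 1) → Fin n → ℝ, Consistent AB.1 AB.2 u x → InfId P u x

/-- An input is `P`-universal for stabilization. -/
def UnivStab {n m T : ℕ} (P : Set (Sys n m)) (u : Fin T → Fin m → ℝ) : Prop :=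
  ∀ AB ∈ P, ∀ x : Fin (T + 1) → Fin n → ℝ, Consistent AB.1 AB.2 u x → InfStab P u x

/-- The Hankel matrix of depth `k` of the input sequence `u`. -/
def Hankel {m T : ℕ} (u : Fin T → Fin m → ℝ) (k : ℕ) :
    Matrix (Fin k × Fin m) (Fin (T + 1 - k)) ℝ :=
  Matrix.of fun q i =>
    u ⟨i.val + q.1.val, by have h1 := i.isLt; have h2 := q.1.isLt; omega⟩ q.2

/-- The input sequence `u` is persistently exciting of order `k`. -/
def PE {m T : ℕ} (u : Fin T → Fin m → ℝ) (k : ℕ) : Prop :=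
  (Hankel u k).rank = k * m

/-- The matrix `[B  x₀]` obtained by appending the column `x₀` to `B`. -/
def augCol {n m : ℕ} (B : Matrix (Fin n) (Fin m) ℝ) (x0 : Fin n → ℝ) :
    Matrix (Fin n) (Fin m ⊕ Fin 1) ℝ :=
  Matrix.fromCols B (Matrix.of fun i _ => x0 i)

/-- Precomposition with `Sum.inl`, extracting the `ℝ^n`-component of a vector in
`ℝ^n × ℝ^m ≃ (Fin n ⊕ Fin m) → ℝ`. -/
def projN (n m : ℕ) : ((Fin n ⊕ Fin m) → ℝ) →ₗ[ℝ] (Fin n → ℝ) :=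
  LinearMap.funLeft ℝ ℝ Sum.inl


section Aux
open Module

/-- Spectrum of a quotient endomorphism is contained in the spectrum (f.d.). -/
lemma spec_mapQ_subset {K : Type*} [Field K] {V : Type*} [AddCommGroup V] [Module K V]
    [FiniteDimensional K V] (W : Submodule K V) (h : Module.End K V)
    (hh : W ≤ W.comap h) {μ : K}
    (hmem : μ ∈ spectrum K (W.mapQ W h hh)) : μ ∈ spectrum K h := by
  by_contra hns
  rw [spectrum.notMem_iff] at hns
  apply absurd hmem
  rw [spectrum.notMem_iff]
  rw [Module.End.isUnit_iff] at hns ⊢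
  have hsurj : Function.Surjective (algebraMap K (Module.End K (V ⧸ W)) μ - W.mapQ W h hh) := by
    intro y
    obtain ⟨x, rfl⟩ := W.mkQ_surjective y
    obtain ⟨z, hz⟩ := hns.2 x
    refine ⟨W.mkQ z, ?_⟩
    have : (algebraMap K (Module.End K (V ⧸ W)) μ - W.mapQ W h hh) (W.mkQ z)
        = W.mkQ ((algebraMap K (Module.End K V) μ - h) z) := by
      simp [Submodule.mapQ_apply, Module.algebraMap_end_apply, map_sub, _root_.map_smul]
    rw [this, hz]
  exact ⟨(LinearMap.injective_iff_surjective).2 hsurj, hsurj⟩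

lemma spec_triple {K : Type*} [Field K] {V : Type*} [AddCommGroup V] [Module K V]
    [FiniteDimensional K V] (W : Submodule K V) (f g h : Module.End K V)
    (hfW : ∀ w ∈ W, f w ∈ W)
    (hgf : ∀ w ∈ W, g w = f w)
    (hhW : ∀ w ∈ W, h w ∈ W)
    (hgh : ∀ x, g x - h x ∈ W) :
    spectrum K g ⊆ spectrum K f ∪ spectrum K h := by
  intro μ hμ
  have hev := Module.End.hasEigenvalue_iff_mem_spectrum.2 hμ
  obtain ⟨v, hv⟩ := hev.exists_hasEigenvector
  by_cases hvW : v ∈ W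
  · left
    refine (Module.End.hasEigenvalue_iff_mem_spectrum (f := f)).1 ?_
    exact Module.End.hasEigenvalue_of_hasEigenvector
      ⟨by rw [Module.End.mem_eigenspace_iff, ← hgf v hvW,
             Module.End.mem_eigenspace_iff.1 hv.1], hv.2⟩
  · right
    have hh' : W ≤ W.comap h := fun w hw => hhW w hw
    refine spec_mapQ_subset W h hh' ?_
    refine (Module.End.hasEigenvalue_iff_mem_spectrum).1 ?_
    refine Module.End.hasEigenvalue_of_hasEigenvector (x := W.mkQ v) ?_
    constructor
    · rw [Module.End.mem_eigenspace_iff, Submodule.mkQ_apply, Submodule.mapQ_apply]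
      have h1 : g v = μ • v := Module.End.mem_eigenspace_iff.1 hv.1
      have h2 : Submodule.Quotient.mk (p := W) (h v) = Submodule.Quotient.mk (g v) := by
        rw [eq_comm, ← sub_eq_zero, ← Submodule.Quotient.mk_sub, Submodule.Quotient.mk_eq_zero]
        exact hgh v
      rw [h2, h1, ← Submodule.mkQ_apply, _root_.map_smul, Submodule.mkQ_apply]
    · simpa [Submodule.mkQ_apply, Submodule.Quotient.mk_eq_zero] using hvW

section CH
variable {n : ℕ}

/-- By Cayley–Hamilton, `A ^ n` is a combination of lower powers. -/
lemma pow_card_eq_sum (A : Matrix (Fin n) (Fin n) ℝ) :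
    A ^ n = ∑ i ∈ Finset.range n, (-(A.charpoly.coeff i)) • A ^ i := by
  have hCH := Matrix.aeval_self_charpoly A
  have hdeg : A.charpoly.natDegree = n := by
    rw [Matrix.charpoly_natDegree_eq_dim, Fintype.card_fin]
  rw [Polynomial.aeval_eq_sum_range, hdeg, Finset.sum_range_succ] at hCH
  have hc1 : A.charpoly.coeff n = 1 := by
    have := A.charpoly_monic.coeff_natDegree
    rwa [hdeg] at this
  rw [hc1, one_smul] at hCH
  rw [eq_neg_of_add_eq_zero_right hCH]
  simp [neg_smul]

/-- The span of `v, Av, …, Aⁿv` contains all `A^k v`. -/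
lemma pow_mulVec_mem_span (A : Matrix (Fin n) (Fin n) ℝ) (v : Fin n → ℝ) (k : ℕ) :
    (A ^ k).mulVec v ∈
      Submodule.span ℝ (Set.range fun i : Fin (n + 1) => (A ^ (i : ℕ)).mulVec v) := by
  set S := Submodule.span ℝ (Set.range fun i : Fin (n + 1) => (A ^ (i : ℕ)).mulVec v) with hS
  have hgen : ∀ i : Fin (n + 1), (A ^ (i : ℕ)).mulVec v ∈ S :=
    fun i => Submodule.subset_span ⟨i, rfl⟩
  have hstep : ∀ z ∈ S, A.mulVec z ∈ S := by
    intro z hz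
    induction hz using Submodule.span_induction with
    | mem w hw =>
      obtain ⟨i, rfl⟩ := hw
      rw [Matrix.mulVec_mulVec, ← pow_succ']
      rcases lt_or_eq_of_le (Nat.lt_succ_iff.1 i.isLt) with hi | hi
      · exact hgen ⟨(i : ℕ) + 1, by omega⟩
      · rw [hi]
        have : A ^ (n + 1) = ∑ i ∈ Finset.range n, (-(A.charpoly.coeff i)) • A ^ (i + 1) := by
          rw [pow_succ', pow_card_eq_sum, Finset.mul_sum]
          exact Finset.sum_congr rfl fun i _ => by
            rw [Matrix.mul_smul, ← pow_succ']
        rw [this]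
        have hsum : (∑ i ∈ Finset.range n, -A.charpoly.coeff i • A ^ (i + 1)).mulVec v
            = ∑ i ∈ Finset.range n, (-A.charpoly.coeff i • A ^ (i + 1)).mulVec v :=
          map_sum (AddMonoidHom.mk' (fun M : Matrix (Fin n) (Fin n) ℝ => M.mulVec v)
            (fun M N => Matrix.add_mulVec M N v)) _ _
        rw [hsum]
        refine Submodule.sum_mem _ fun i hi => ?_
        have hilt := Finset.mem_range.1 hi
        rw [Matrix.smul_mulVec]
        exact Submodule.smul_mem _ _ (hgen ⟨i + 1, by omega⟩)
    | zero => simpa using Submodule.zero_mem S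
    | add a b _ _ ha hb => rw [Matrix.mulVec_add]; exact Submodule.add_mem _ ha hb
    | smul c a _ ha => rw [Matrix.mulVec_smul]; exact Submodule.smul_mem _ _ ha
  induction k with
  | zero => simpa using hgen ⟨0, by omega⟩
  | succ k ih =>
    have := hstep _ ih
    rwa [Matrix.mulVec_mulVec, ← pow_succ'] at this
end CH


/-- Key spectral lemma: if `A*G = G*Wm`, `A'*G = A*G`, `B = G*H`, and both
`A + B*K` and `A' + B*K'` are Schur, then `A' + B*K` is Schur. -/
lemma key_schur {n m : ℕ} {p : Type*} [Fintype p]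
    (A A' : Matrix (Fin n) (Fin n) ℝ) (B : Matrix (Fin n) (Fin m) ℝ)
    (K K' : Matrix (Fin m) (Fin n) ℝ) (G : Matrix (Fin n) p ℝ)
    (Wm : Matrix p p ℝ) (H : Matrix p (Fin m) ℝ)
    (hAG : A * G = G * Wm) (hA'G : A' * G = A * G) (hB : B = G * H)
    (hK : Schur (A + B * K)) (hK' : Schur (A' + B * K')) :
    Schur (A' + B * K) := by
  classical
  set c : ℝ →+* ℂ := Complex.ofRealHom with hc
  have hmapc : ((↑·) : ℝ → ℂ) = c := rfl
  set Ac := A.map c with hAc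
  set A'c := A'.map c with hA'c
  set Bc := B.map c with hBc
  set Kc := K.map c with hKc
  set K'c := K'.map c with hK'c
  set Gc := G.map c with hGc
  set Wmc := Wm.map c with hWmc
  set Hc := H.map c with hHc
  have hAGc : Ac * Gc = Gc * Wmc := by
    rw [hAc, hGc, hWmc, ← Matrix.map_mul, ← Matrix.map_mul, hAG]
  have hA'Gc : A'c * Gc = Ac * Gc := by
    rw [hAc, hA'c, hGc, ← Matrix.map_mul, ← Matrix.map_mul, hA'G]
  have hBc' : Bc = Gc * Hc := by
    rw [hBc, hGc, hHc, ← Matrix.map_mul, hB]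
  -- the three endomorphisms and the invariant subspace
  set f := Matrix.toLin' (Ac + Bc * Kc) with hf
  set g := Matrix.toLin' (A'c + Bc * Kc) with hg
  set h := Matrix.toLin' (A'c + Bc * K'c) with hh
  set W : Submodule ℂ (Fin n → ℂ) := LinearMap.range Gc.mulVecLin with hW
  have hmem : ∀ w, w ∈ W ↔ ∃ y, Gc.mulVec y = w := by
    intro w
    simp [hW, LinearMap.mem_range, Matrix.mulVecLin_apply]
  have htriple := spec_triple W f g h
    (by
      rintro w hw
      obtain ⟨y, rfl⟩ := (hmem w).1 hw
      refine (hmem _).2 ⟨(Wmc + Hc * (Kc * Gc)).mulVec y, ?_⟩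
      rw [hf, Matrix.toLin'_apply, Matrix.mulVec_mulVec, Matrix.mulVec_mulVec]
      congr 1
      rw [Matrix.add_mul, hAGc, hBc', Matrix.mul_add]
      simp [Matrix.mul_assoc])
    (by
      intro w hw
      obtain ⟨y, rfl⟩ := (hmem w).1 hw
      rw [hf, hg, Matrix.toLin'_apply, Matrix.toLin'_apply,
        Matrix.mulVec_mulVec, Matrix.mulVec_mulVec]
      congr 1
      rw [Matrix.add_mul, Matrix.add_mul, hA'Gc])
    (by
      rintro w hw
      obtain ⟨y, rfl⟩ := (hmem w).1 hw
      refine (hmem _).2 ⟨(Wmc + Hc * (K'c * Gc)).mulVec y, ?_⟩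
      rw [hh, Matrix.toLin'_apply, Matrix.mulVec_mulVec, Matrix.mulVec_mulVec]
      congr 1
      rw [Matrix.add_mul, hA'Gc, hAGc, hBc', Matrix.mul_add]
      simp [Matrix.mul_assoc])
    (by
      intro x
      refine (hmem _).2 ⟨(Hc * (Kc - K'c)).mulVec x, ?_⟩
      rw [hg, hh, Matrix.toLin'_apply, Matrix.toLin'_apply, Matrix.mulVec_mulVec]
      have : Gc * (Hc * (Kc - K'c)) = (A'c + Bc * Kc) - (A'c + Bc * K'c) := by
        rw [add_sub_add_left_eq_sub, ← Matrix.mul_sub, hBc', Matrix.mul_assoc]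
      rw [this, Matrix.sub_mulVec])
  -- translate spectra of matrices and their `toLin'`
  have hspec : ∀ M : Matrix (Fin n) (Fin n) ℂ,
      spectrum ℂ (Matrix.toLin' M) = spectrum ℂ M := by
    intro M
    have : Matrix.toLin' M = Matrix.toLinAlgEquiv' M := rfl
    rw [this, AlgEquiv.spectrum_eq]
  intro μ hμ
  have hmap : (A' + B * K).map ((↑·) : ℝ → ℂ) = A'c + Bc * Kc := by
    rw [hmapc, hA'c, hBc, hKc, ← Matrix.map_mul]
    exact Matrix.map_add _ (by simp) _ _
  rw [hmap, ← hspec] at hμ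
  rcases htriple hμ with hcase | hcase
  · refine hK μ ?_
    have hmapf : (A + B * K).map ((↑·) : ℝ → ℂ) = Ac + Bc * Kc := by
      rw [hmapc, hAc, hBc, hKc, ← Matrix.map_mul]
      exact Matrix.map_add _ (by simp) _ _
    rwa [hmapf, ← hspec]
  · refine hK' μ ?_
    have hmaph : (A' + B * K').map ((↑·) : ℝ → ℂ) = A'c + Bc * K'c := by
      rw [hmapc, hA'c, hBc, hK'c, ← Matrix.map_mul]
      exact Matrix.map_add _ (by simp) _ _
    rwa [hmaph, ← hspec]

end Aux

section Data

variable {n m : ℕ}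

private lemma uu_idx_lt {t : ℕ} (ht : t < m * (n + 2) + (n + 1))
    (h : t % (n + 2) = n + 1) : t / (n + 2) < m := by
  have h1 := Nat.div_add_mod t (n + 2)
  rcases Nat.lt_or_ge (t / (n + 2)) m with h2 | h2
  · exact h2
  · have h3 := Nat.mul_le_mul_left (n + 2) h2
    have h4 : m * (n + 2) = (n + 2) * m := Nat.mul_comm _ _
    omega

/-- The universal input sequence: blocks of `n+1` zeros separated by impulses. -/
def uu (n m : ℕ) : Fin (m * (n + 2) + (n + 1)) → Fin m → ℝ := fun t =>
  if h : (t : ℕ) % (n + 2) = n + 1 then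
    Pi.single (⟨(t : ℕ) / (n + 2), uu_idx_lt t.isLt h⟩ : Fin m) 1
  else 0

private lemma time_bound {j k c : ℕ} (hj : j ≤ m) (hk : k ≤ c) :
    j * (n + 2) + k ≤ m * (n + 2) + c :=
  Nat.add_le_add (Nat.mul_le_mul_right _ hj) hk

private lemma mod_block {j k : ℕ} (hk : k < n + 2) : (j * (n + 2) + k) % (n + 2) = k := by
  rw [Nat.mul_comm, Nat.mul_add_mod, Nat.mod_eq_of_lt hk]

private lemma div_block {j k : ℕ} (hk : k < n + 2) : (j * (n + 2) + k) / (n + 2) = j := by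
  rw [Nat.mul_comm, Nat.mul_add_div (by omega), Nat.div_eq_of_lt hk, Nat.add_zero]

variable {A A' : Matrix (Fin n) (Fin n) ℝ} {B B' : Matrix (Fin n) (Fin m) ℝ}
  {x : Fin (m * (n + 2) + (n + 1) + 1) → Fin n → ℝ}

private lemma consistent_step (hx : Consistent A B (uu n m) x) (t : ℕ)
    (ht : t < m * (n + 2) + (n + 1)) :
    x ⟨t + 1, Nat.succ_lt_succ ht⟩ =
      A.mulVec (x ⟨t, Nat.lt_succ_of_lt ht⟩) + B.mulVec (uu n m ⟨t, ht⟩) :=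
  hx ⟨t, ht⟩

private lemma state_pow (hx : Consistent A B (uu n m) x) {j : ℕ} (hj : j ≤ m) :
    ∀ (k : ℕ) (hk : k ≤ n + 1),
      x ⟨j * (n + 2) + k, Nat.lt_succ_of_le (time_bound hj hk)⟩ =
        (A ^ k).mulVec (x ⟨j * (n + 2), Nat.lt_succ_of_le (time_bound hj (Nat.zero_le _))⟩) := by
  have key : ∀ k, k ≤ n + 1 → ∀ (h1 : j * (n + 2) + k < m * (n + 2) + (n + 1) + 1),
      x ⟨j * (n + 2) + k, h1⟩ =
        (A ^ k).mulVec (x ⟨j * (n + 2), Nat.lt_succ_of_le (time_bound hj (Nat.zero_le _))⟩) := by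
    intro k
    induction k with
    | zero =>
      intro _ h1
      rw [pow_zero, Matrix.one_mulVec]
      exact congrArg x (Fin.ext (Nat.add_zero _))
    | succ k ih =>
      intro hk h1
      have hkn : k ≤ n := by omega
      have ht : j * (n + 2) + k < m * (n + 2) + (n + 1) := by
        have := time_bound (n := n) (c := n) hj hkn
        omega
      have hstep := consistent_step hx (j * (n + 2) + k) ht
      have hmod : (j * (n + 2) + k) % (n + 2) = k := mod_block (by omega)
      have huz : uu n m ⟨j * (n + 2) + k, ht⟩ = 0 := by
        simp only [uu]
        exact dif_neg (by rw [hmod]; omega)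
      rw [huz, Matrix.mulVec_zero, add_zero] at hstep
      have hx1 : x ⟨j * (n + 2) + (k + 1), h1⟩ =
          x ⟨j * (n + 2) + k + 1, Nat.succ_lt_succ ht⟩ := by
        congr 1
      rw [hx1, hstep, ih (by omega) (Nat.lt_succ_of_lt ht), Matrix.mulVec_mulVec, ← pow_succ']
  exact fun k hk => key k hk _

private lemma state_impulse (hx : Consistent A B (uu n m) x) {j : ℕ} (hj : j < m) :
    x ⟨(j + 1) * (n + 2), Nat.lt_succ_of_le (by
        have hj' : j + 1 ≤ m := hj
        have h4 := Nat.mul_le_mul_right (n + 2) hj'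
        exact le_trans h4 (Nat.le_add_right _ _))⟩ =
      A.mulVec (x ⟨j * (n + 2) + (n + 1),
        Nat.lt_succ_of_le (time_bound (le_of_lt hj) (le_refl _))⟩) +
        B.mulVec (Pi.single (⟨j, hj⟩ : Fin m) 1) := by
  have ht : j * (n + 2) + (n + 1) < m * (n + 2) + (n + 1) := by
    have hj' : j + 1 ≤ m := hj
    have h4 := Nat.mul_le_mul_right (n + 2) hj'
    have h5 : (j + 1) * (n + 2) = j * (n + 2) + (n + 2) := by ring
    omega
  have hstep := consistent_step hx (j * (n + 2) + (n + 1)) ht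
  have hmod : (j * (n + 2) + (n + 1)) % (n + 2) = n + 1 := mod_block (by omega)
  have hdiv : (j * (n + 2) + (n + 1)) / (n + 2) = j := div_block (by omega)
  have huv : uu n m ⟨j * (n + 2) + (n + 1), ht⟩ = Pi.single (⟨j, hj⟩ : Fin m) 1 := by
    simp only [uu]
    rw [dif_pos hmod]
    exact congrArg (fun i : Fin m => Pi.single i (1 : ℝ)) (Fin.ext hdiv)
  rw [huv] at hstep
  have hx1 : (⟨(j + 1) * (n + 2), Nat.lt_succ_of_le (by
        have hj' : j + 1 ≤ m := hj
        have h4 := Nat.mul_le_mul_right (n + 2) hj'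
        exact le_trans h4 (Nat.le_add_right _ _))⟩ : Fin (m * (n + 2) + (n + 1) + 1)) =
      ⟨j * (n + 2) + (n + 1) + 1, Nat.succ_lt_succ ht⟩ := Fin.ext (by ring)
  rw [hx1, hstep]

/-- The main data lemma: two systems consistent with the universal input share `B`,
and there is a factorization witnessing invariance. -/
private lemma consistent_factor (hx : Consistent A B (uu n m) x)
    (hx' : Consistent A' B' (uu n m) x) :
    B' = B ∧ ∃ (G : Matrix (Fin n) ((Fin (n + 1)) × (Fin (m + 1))) ℝ)
      (Wm : Matrix ((Fin (n + 1)) × (Fin (m + 1))) ((Fin (n + 1)) × (Fin (m + 1))) ℝ)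
      (H : Matrix ((Fin (n + 1)) × (Fin (m + 1))) (Fin m) ℝ),
      A * G = G * Wm ∧ A' * G = A * G ∧ B = G * H := by
  classical
  -- the base states of each block
  set v : Fin (m + 1) → Fin n → ℝ := fun j =>
    x ⟨(j : ℕ) * (n + 2),
      Nat.lt_succ_of_le (time_bound (Nat.lt_succ_iff.mp j.isLt) (Nat.zero_le _))⟩ with hv
  set G : Matrix (Fin n) ((Fin (n + 1)) × (Fin (m + 1))) ℝ :=
    Matrix.of (fun i q => (A ^ (q.1 : ℕ)).mulVec (v q.2) i) with hG
  set W : Submodule ℝ (Fin n → ℝ) := LinearMap.range G.mulVecLin with hW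
  have hcolG : ∀ q : (Fin (n + 1)) × (Fin (m + 1)),
      Gᵀ q = (A ^ (q.1 : ℕ)).mulVec (v q.2) := fun q => rfl
  have hWspan : W = Submodule.span ℝ (Set.range Gᵀ) := Matrix.range_mulVecLin G
  have hpow_mem : ∀ (j : Fin (m + 1)) (k : ℕ), (A ^ k).mulVec (v j) ∈ W := by
    intro j k
    refine Submodule.span_le.2 ?_ (pow_mulVec_mem_span A (v j) k)
    rintro w ⟨i, rfl⟩
    rw [hWspan]
    exact Submodule.subset_span ⟨(i, j), (hcolG (i, j)).symm⟩
  -- A' agrees with A on all states A^k v j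
  have hker : ∀ (j : Fin (m + 1)) (k : ℕ),
      A'.mulVec ((A ^ k).mulVec (v j)) = A.mulVec ((A ^ k).mulVec (v j)) := by
    intro j k
    have hgen : ∀ i : Fin (n + 1),
        (A ^ (i : ℕ)).mulVec (v j) ∈ LinearMap.ker (A'.mulVecLin - A.mulVecLin) := by
      intro i
      have hik : (i : ℕ) ≤ n := by omega
      have ht : (j : ℕ) * (n + 2) + (i : ℕ) < m * (n + 2) + (n + 1) := by
        have := time_bound (n := n) (c := n) (by omega : (j : ℕ) ≤ m) hik
        omega
      have hst := state_pow hx (by omega : (j : ℕ) ≤ m) (i : ℕ) (by omega)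
      have hstep := consistent_step hx ((j : ℕ) * (n + 2) + (i : ℕ)) ht
      have hstep' := consistent_step hx' ((j : ℕ) * (n + 2) + (i : ℕ)) ht
      have hmod : ((j : ℕ) * (n + 2) + (i : ℕ)) % (n + 2) = (i : ℕ) := mod_block (by omega)
      have huz : uu n m ⟨(j : ℕ) * (n + 2) + (i : ℕ), ht⟩ = 0 := by
        simp only [uu]
        exact dif_neg (by rw [hmod]; omega)
      rw [huz, Matrix.mulVec_zero, add_zero] at hstep hstep'
      rw [LinearMap.mem_ker, LinearMap.sub_apply, Matrix.mulVecLin_apply,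
        Matrix.mulVecLin_apply, sub_eq_zero, ← hst, ← hstep, ← hstep']
    have hsub : Submodule.span ℝ
        (Set.range fun i : Fin (n + 1) => (A ^ (i : ℕ)).mulVec (v j)) ≤
        LinearMap.ker (A'.mulVecLin - A.mulVecLin) := by
      rw [Submodule.span_le]
      rintro w ⟨i, rfl⟩
      exact hgen i
    have := hsub (pow_mulVec_mem_span A (v j) k)
    rw [LinearMap.mem_ker, LinearMap.sub_apply, Matrix.mulVecLin_apply,
      Matrix.mulVecLin_apply, sub_eq_zero] at this
    exact this
  -- invariance: A * G factors through G
  have hcolA : ∀ q : (Fin (n + 1)) × (Fin (m + 1)),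
      ∃ y, G.mulVec y = A.mulVec ((A ^ (q.1 : ℕ)).mulVec (v q.2)) := by
    intro q
    have : A.mulVec ((A ^ (q.1 : ℕ)).mulVec (v q.2)) =
        (A ^ ((q.1 : ℕ) + 1)).mulVec (v q.2) := by
      rw [Matrix.mulVec_mulVec, ← pow_succ']
    rw [this]
    obtain ⟨y, hy⟩ := hpow_mem q.2 ((q.1 : ℕ) + 1)
    exact ⟨y, hy⟩
  choose Y hY using hcolA
  -- B's columns lie in the span
  have himp : ∀ j : Fin m,
      (fun i => B i j) = v ⟨(j : ℕ) + 1, Nat.succ_lt_succ j.isLt⟩ -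
        A.mulVec ((A ^ (n + 1)).mulVec (v ⟨(j : ℕ), Nat.lt_succ_of_lt j.isLt⟩)) := by
    intro j
    have himp1 := state_impulse hx (j.isLt)
    have hst := state_pow hx (by omega : (j : ℕ) ≤ m) (n + 1) (le_refl _)
    have hBj : B.mulVec (Pi.single (⟨(j : ℕ), j.isLt⟩ : Fin m) 1) = fun i => B i j := by
      rw [Matrix.mulVec_single_one]
      rfl
    have hv1 : v ⟨(j : ℕ) + 1, Nat.succ_lt_succ j.isLt⟩ =
        x ⟨((j : ℕ) + 1) * (n + 2), Nat.lt_succ_of_le (time_bound j.isLt (Nat.zero_le _))⟩ := rfl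
    rw [hv1]
    have := himp1
    rw [hst] at this
    rw [show x ⟨((j : ℕ) + 1) * (n + 2), _⟩ =
      A.mulVec ((A ^ (n + 1)).mulVec (v ⟨(j : ℕ), Nat.lt_succ_of_lt j.isLt⟩)) +
        B.mulVec (Pi.single (⟨(j : ℕ), j.isLt⟩ : Fin m) 1) from this]
    rw [hBj]
    abel
  have hcolB : ∀ j : Fin m, ∃ y, G.mulVec y = fun i => B i j := by
    intro j
    have hmem : (fun i => B i j) ∈ W := by
      rw [himp j]
      refine Submodule.sub_mem _ ?_ ?_
      · have := hpow_mem ⟨(j : ℕ) + 1, Nat.succ_lt_succ j.isLt⟩ 0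
        rwa [pow_zero, Matrix.one_mulVec] at this
      · have : A.mulVec ((A ^ (n + 1)).mulVec (v ⟨(j : ℕ), Nat.lt_succ_of_lt j.isLt⟩)) =
            (A ^ (n + 2)).mulVec (v ⟨(j : ℕ), Nat.lt_succ_of_lt j.isLt⟩) := by
          rw [Matrix.mulVec_mulVec, ← pow_succ']
        rw [this]
        exact hpow_mem _ _
    exact hmem
  choose Z hZ using hcolB
  constructor
  · -- B' = B
    ext i j
    have himp1 := state_impulse hx (j.isLt)
    have himp1' := state_impulse hx' (j.isLt)
    have hst := state_pow hx (by omega : (j : ℕ) ≤ m) (n + 1) (le_refl _)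
    have hAA' := hker ⟨(j : ℕ), Nat.lt_succ_of_lt j.isLt⟩ (n + 1)
    rw [hst] at himp1 himp1'
    have : A'.mulVec ((A ^ (n + 1)).mulVec (v ⟨(j : ℕ), Nat.lt_succ_of_lt j.isLt⟩)) +
        B'.mulVec (Pi.single (⟨(j : ℕ), j.isLt⟩ : Fin m) 1) =
        A.mulVec ((A ^ (n + 1)).mulVec (v ⟨(j : ℕ), Nat.lt_succ_of_lt j.isLt⟩)) +
        B.mulVec (Pi.single (⟨(j : ℕ), j.isLt⟩ : Fin m) 1) := by
      rw [← himp1, ← himp1']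
    rw [hAA'] at this
    have hBB := add_left_cancel this
    have := congrFun hBB i
    rw [Matrix.mulVec_single, Matrix.mulVec_single] at this
    simpa [Fin.eta] using this
  · refine ⟨G, Matrix.of (fun p q => Y q p), Matrix.of (fun p j => Z j p), ?_, ?_, ?_⟩
    · ext i q
      have h1 : (A * G) i q = A.mulVec (fun k => G k q) i := rfl
      have h2 : (G * Matrix.of (fun p q => Y q p)) i q = G.mulVec (Y q) i := rfl
      rw [h1, h2]
      have hcol : (fun k => G k q) = (A ^ (q.1 : ℕ)).mulVec (v q.2) := rfl
      rw [hcol, hY q]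
    · ext i q
      have h1 : (A' * G) i q = A'.mulVec (fun k => G k q) i := rfl
      have h2 : (A * G) i q = A.mulVec (fun k => G k q) i := rfl
      have hcol : (fun k => G k q) = (A ^ (q.1 : ℕ)).mulVec (v q.2) := rfl
      rw [h1, h2, hcol, hker q.2 (q.1 : ℕ)]
    · ext i j
      have h2 : (G * Matrix.of (fun p j => Z j p)) i j = G.mulVec (Z j) i := rfl
      rw [h2, hZ j]

end Data

/-- There exists a `Σ_pk`-universal input for stabilization
(of some length `T`) iff `Σ_pk ⊆ Σ_stab`. -/
theorem stmt_16 {n m : ℕ} (hn : 0 < n) (hm : 0 < m)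
    (P : Set (Sys n m)) :
    (∃ (T : ℕ) (u : Fin T → Fin m → ℝ), UnivStab P u) ↔ P ⊆ SigmaStab n m := by
  constructor
  · rintro ⟨T, u, hu⟩ ⟨A, B⟩ hAB
    classical
    set x' : ℕ → Fin n → ℝ := fun t =>
      Nat.rec (motive := fun _ => Fin n → ℝ) 0
        (fun s xs => A.mulVec xs + B.mulVec (if h : s < T then u ⟨s, h⟩ else 0)) t with hx'
    have hcons : Consistent A B u (fun t : Fin (T + 1) => x' (t : ℕ)) := by
      intro t
      show x' ((t : ℕ) + 1) = A.mulVec (x' ((t.castSucc : Fin (T + 1)) : ℕ)) + B.mulVec (u t)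
      have h1 : x' ((t : ℕ) + 1) = A.mulVec (x' (t : ℕ)) +
          B.mulVec (if h : (t : ℕ) < T then u ⟨(t : ℕ), h⟩ else 0) := rfl
      rw [h1, dif_pos t.isLt]
      congr
    obtain ⟨K, hK⟩ := hu ⟨A, B⟩ hAB _ hcons
    exact ⟨K, hK ⟨A, B⟩ ⟨hcons, hAB⟩⟩
  · intro hP
    refine ⟨m * (n + 2) + (n + 1), uu n m, ?_⟩
    rintro ⟨A, B⟩ hAB x hx
    obtain ⟨K, hK⟩ := hP hAB
    refine ⟨K, ?_⟩
    rintro ⟨A', B'⟩ ⟨hx', hP'⟩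
    obtain ⟨K', hK'⟩ := hP hP'
    obtain ⟨hB'B, G, Wm, H, hAG, hA'G, hBGH⟩ := consistent_factor hx hx'
    have hK'₂ : Schur (A' + B * K') := by rwa [hB'B] at hK'
    have hgoal := key_schur A A' B K K' G Wm H hAG hA'G hBGH hK hK'₂
    show Schur (A' + B' * K)
    rwa [show B' = B from hB'B]
end

section
/- Let (A,B) be controllable and let x_0 ∈ ℝ^n. Then there exists input-state data D = (u,x) of length T = n + m consistent with (A,B) with x(0) = x_0 such that the stacked (n+m)×(n+m) matrix [X_-; U_-] has rank n+m; in particular, D is Σ_cont-informative for identification. -/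
open Matrix

namespace Stmt17Aux

open Submodule Set

variable {n m : ℕ} (A : Matrix (Fin n) (Fin n) ℝ) (B : Matrix (Fin n) (Fin m) ℝ)
  (x0 : Fin n → ℝ)

/-- Avoid two "affine-preimage-of-subspace" bad sets simultaneously. -/
lemma avoid_two {E F G : Type*} [AddCommGroup E] [Module ℝ E]
    [AddCommGroup F] [Module ℝ F] [AddCommGroup G] [Module ℝ G]
    (f : E →ₗ[ℝ] F) (g : E →ₗ[ℝ] G) (cf : F) (cg : G)
    (Sf : Submodule ℝ F) (Sg : Submodule ℝ G)
    (hf : ∃ a, cf + f a ∉ Sf) (hg : ∃ b, cg + g b ∉ Sg) :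
    ∃ w, cf + f w ∉ Sf ∧ cg + g w ∉ Sg := by
  obtain ⟨a, ha⟩ := hf
  obtain ⟨b, hb⟩ := hg
  by_cases hag : cg + g a ∈ Sg
  swap
  · exact ⟨a, ha, hag⟩
  by_cases hbf : cf + f b ∈ Sf
  swap
  · exact ⟨b, hbf, hb⟩
  set d := a - b with hd
  have keyf : ∀ s t : ℝ, s ≠ t → cf + f (b + s • d) ∈ Sf → cf + f (b + t • d) ∈ Sf → False := by
    intro s t hst h1 h2
    have hdm : f d ∈ Sf := by
      have hsub := Sf.sub_mem h1 h2
      have e : (cf + f (b + s • d)) - (cf + f (b + t • d)) = (s - t) • f d := by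
        simp [map_add, _root_.map_smul, smul_sub, sub_smul]
      rw [e] at hsub
      have := Sf.smul_mem (s - t)⁻¹ hsub
      rwa [smul_smul, inv_mul_cancel₀ (sub_ne_zero.mpr hst), one_smul] at this
    have : cf + f a ∈ Sf := by
      have e : cf + f a = (cf + f b) + f d := by
        rw [hd, map_sub]; abel
      rw [e]
      exact Sf.add_mem hbf hdm
    exact ha this
  have keyg : ∀ s t : ℝ, s ≠ t → cg + g (b + s • d) ∈ Sg → cg + g (b + t • d) ∈ Sg → False := by
    intro s t hst h1 h2
    have hdm : g d ∈ Sg := by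
      have hsub := Sg.sub_mem h1 h2
      have e : (cg + g (b + s • d)) - (cg + g (b + t • d)) = (s - t) • g d := by
        simp [map_add, _root_.map_smul, smul_sub, sub_smul]
      rw [e] at hsub
      have := Sg.smul_mem (s - t)⁻¹ hsub
      rwa [smul_smul, inv_mul_cancel₀ (sub_ne_zero.mpr hst), one_smul] at this
    have : cg + g b ∈ Sg := by
      have heq : cg + g b = (cg + g (b + s • d)) - s • g d := by
        simp [map_add, _root_.map_smul]; abel
      rw [heq]
      exact Sg.sub_mem h1 (Sg.smul_mem s hdm)
    exact hb this
  by_contra hcon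
  push_neg at hcon
  have bad : ∀ s : ℝ, cf + f (b + s • d) ∈ Sf ∨ cg + g (b + s • d) ∈ Sg := by
    intro s
    by_cases h : cf + f (b + s • d) ∈ Sf
    · exact Or.inl h
    · exact Or.inr (hcon _ h)
  rcases bad 0 with h0 | h0 <;> rcases bad 1 with h1 | h1 <;> rcases bad 2 with h2 | h2
  all_goals first
    | exact keyf 0 1 (by norm_num) h0 h1
    | exact keyf 0 2 (by norm_num) h0 h2
    | exact keyf 1 2 (by norm_num) h1 h2
    | exact keyg 0 1 (by norm_num) h0 h1
    | exact keyg 0 2 (by norm_num) h0 h2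
    | exact keyg 1 2 (by norm_num) h1 h2

/-- The trajectory generated by the input sequence `w` from initial state `x0`. -/
def traj (w : ℕ → Fin m → ℝ) : ℕ → Fin n → ℝ
  | 0 => x0
  | t + 1 => A.mulVec (traj w t) + B.mulVec (w t)

lemma traj_congr (w w' : ℕ → Fin m → ℝ) :
    ∀ t, (∀ s < t, w s = w' s) → traj A B x0 w t = traj A B x0 w' t
  | 0, _ => rfl
  | t + 1, h => by
    rw [traj, traj, traj_congr w w' t (fun s hs => h s (Nat.lt_succ_of_lt hs)),
      h t (Nat.lt_succ_self t)]

/-- The combined state-input column at time `i`. -/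
def zcol (w : ℕ → Fin m → ℝ) (i : ℕ) : (Fin n ⊕ Fin m) → ℝ :=
  Sum.elim (traj A B x0 w i) (w i)

/-- The span of the first `t` combined columns. -/
def Scols (w : ℕ → Fin m → ℝ) (t : ℕ) : Submodule ℝ ((Fin n ⊕ Fin m) → ℝ) :=
  span ℝ (range fun i : Fin t => zcol A B x0 w i)

/-- The span of the first `t` states. -/
def Vst (w : ℕ → Fin m → ℝ) (t : ℕ) : Submodule ℝ (Fin n → ℝ) :=
  span ℝ (range fun i : Fin t => traj A B x0 w i)

/-- The induction invariant. -/
def GoodW (w : ℕ → Fin m → ℝ) (t : ℕ) : Prop :=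
  LinearIndependent ℝ (fun i : Fin t => zcol A B x0 w i) ∧
  (t = 0 ∨ Vst A B x0 w t = ⊤ ∨ traj A B x0 w t ∉ Vst A B x0 w t)

/-- Embedding of `ℝ^m` into the sum space. -/
def inrL : (Fin m → ℝ) →ₗ[ℝ] ((Fin n ⊕ Fin m) → ℝ) where
  toFun v := Sum.elim 0 v
  map_add' v v' := by funext q; cases q <;> simp
  map_smul' c v := by funext q; cases q <;> simp

/-- Embedding of `ℝ^n` into the sum space. -/
def inlL : (Fin n → ℝ) →ₗ[ℝ] ((Fin n ⊕ Fin m) → ℝ) where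
  toFun v := Sum.elim v 0
  map_add' v v' := by funext q; cases q <;> simp
  map_smul' c v := by funext q; cases q <;> simp

lemma exists_a (hm : 0 < m) (w : ℕ → Fin m → ℝ) (t : ℕ) (ht : t < n + m)
    (hLI : LinearIndependent ℝ (fun i : Fin t => zcol A B x0 w i))
    (hinv : t = 0 ∨ Vst A B x0 w t = ⊤ ∨ traj A B x0 w t ∉ Vst A B x0 w t) :
    ∃ wt : Fin m → ℝ, Sum.elim (traj A B x0 w t) wt ∉ Scols A B x0 w t := by
  by_contra hcon
  push_neg at hcon
  set S := Scols A B x0 w t with hS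
  have h0 : Sum.elim (traj A B x0 w t) (0 : Fin m → ℝ) ∈ S := hcon 0
  have hw : ∀ v : Fin m → ℝ, inrL (n := n) v ∈ S := by
    intro v
    have e : inrL (n := n) v =
        Sum.elim (traj A B x0 w t) v - Sum.elim (traj A B x0 w t) 0 := by
      funext q; cases q <;> simp [inrL]
    rw [e]
    exact S.sub_mem (hcon v) h0
  rcases hinv with h | h | h
  · subst h
    have hbot : S = ⊥ := by
      rw [hS, Scols]
      rw [Set.range_eq_empty]
      exact span_empty
    have := hw 1
    rw [hbot, mem_bot] at this
    have := congr_fun this (Sum.inr ⟨0, hm⟩)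
    simp [inrL] at this
  · have hxS : ∀ i : Fin t, inlL (m := m) (traj A B x0 w i) ∈ S := by
      intro i
      have hz : Sum.elim (traj A B x0 w i) (w i) ∈ S :=
        subset_span (mem_range_self i)
      have e : inlL (m := m) (traj A B x0 w i) =
          Sum.elim (traj A B x0 w i) (w i) - inrL (n := n) (w i) := by
        funext q; cases q <;> simp [inlL, inrL]
      rw [e]
      exact S.sub_mem hz (hw _)
    have hmap : Submodule.map (inlL (m := m)) (Vst A B x0 w t) ≤ S := by
      rw [Vst, Submodule.map_span, ← Set.range_comp]
      refine span_le.mpr ?_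
      rintro _ ⟨i, rfl⟩
      exact hxS i
    have hStop : S = ⊤ := by
      rw [eq_top_iff]
      intro v _
      have hv : v = inlL (m := m) (v ∘ Sum.inl) + inrL (n := n) (v ∘ Sum.inr) := by
        funext q; cases q <;> simp [inlL, inrL]
      rw [hv]
      refine S.add_mem ?_ (hw _)
      refine hmap ⟨v ∘ Sum.inl, ?_, rfl⟩
      rw [h]; trivial
    have h1 : Module.finrank ℝ S = t := by
      rw [hS, Scols, finrank_span_eq_card hLI, Fintype.card_fin]
    rw [hStop] at h1
    rw [finrank_top, Module.finrank_pi] at h1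
    simp at h1
    omega
  · apply h
    have hmem : traj A B x0 w t ∈
        Submodule.map (LinearMap.funLeft ℝ ℝ (Sum.inl : Fin n → Fin n ⊕ Fin m)) S :=
      ⟨_, h0, rfl⟩
    rw [hS, Scols, Submodule.map_span, ← Set.range_comp] at hmem
    have e : ((LinearMap.funLeft ℝ ℝ (Sum.inl : Fin n → Fin n ⊕ Fin m)) ∘
        fun i : Fin t => zcol A B x0 w i) = fun i : Fin t => traj A B x0 w i := by
      funext i; rfl
    rw [e] at hmem
    exact hmem

lemma exists_b (hcont : Controllable A B) (w : ℕ → Fin m → ℝ) (t : ℕ)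
    (hV : Vst A B x0 w (t + 1) ≠ ⊤) :
    ∃ wt : Fin m → ℝ,
      A.mulVec (traj A B x0 w t) + B.mulVec wt ∉ Vst A B x0 w (t + 1) := by
  by_contra hcon
  push_neg at hcon
  set V := Vst A B x0 w (t + 1) with hVdef
  have hB : ∀ v : Fin m → ℝ, B.mulVec v ∈ V := by
    intro v
    have e : B.mulVec v = (A.mulVec (traj A B x0 w t) + B.mulVec v) -
        (A.mulVec (traj A B x0 w t) + B.mulVec 0) := by
      rw [Matrix.mulVec_zero]; abel
    rw [e]
    exact V.sub_mem (hcon v) (hcon 0)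
  have hxV : ∀ s, s ≤ t → traj A B x0 w s ∈ V := by
    intro s hs
    exact subset_span ⟨⟨s, by omega⟩, rfl⟩
  have hAx : ∀ s, s ≤ t → A.mulVec (traj A B x0 w s) ∈ V := by
    intro s hs
    rcases Nat.lt_or_ge s t with hlt | hge
    · have e : A.mulVec (traj A B x0 w s) = traj A B x0 w (s + 1) - B.mulVec (w s) := by
        rw [traj]; abel
      rw [e]
      exact V.sub_mem (hxV (s + 1) (by omega)) (hB _)
    · have hst : s = t := by omega
      subst hst
      have := hcon 0
      rwa [Matrix.mulVec_zero, add_zero] at this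
  have hAV : ∀ v ∈ V, A.mulVec v ∈ V := by
    intro v hv
    induction hv using Submodule.span_induction with
    | mem x hx =>
      obtain ⟨i, rfl⟩ := hx
      exact hAx i (by omega)
    | zero => rw [Matrix.mulVec_zero]; exact V.zero_mem
    | add x y _ _ hx hy => rw [Matrix.mulVec_add]; exact V.add_mem hx hy
    | smul c x _ hx => rw [Matrix.mulVec_smul]; exact V.smul_mem c hx
  have hpow : ∀ (k : ℕ) (v : Fin n → ℝ), v ∈ V → (A ^ k).mulVec v ∈ V := by
    intro k
    induction k with
    | zero => intro v hv; rwa [pow_zero, Matrix.one_mulVec]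
    | succ k ih =>
      intro v hv
      rw [pow_succ', ← Matrix.mulVec_mulVec]
      exact hAV _ (ih v hv)
  have hcol : ∀ q : Fin n × Fin m, (reachMat A B)ᵀ q ∈ V := by
    rintro ⟨k, j⟩
    have e : (reachMat A B)ᵀ (k, j) = (A ^ (k : ℕ)).mulVec (B.mulVec (Pi.single j 1)) := by
      rw [Matrix.mulVec_mulVec, Matrix.mulVec_single_one]
      rfl
    rw [e]
    exact hpow _ _ (hB _)
  have hrank : (reachMat A B).rank ≤ Module.finrank ℝ V := by
    rw [Matrix.rank, Matrix.range_mulVecLin]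
    refine Submodule.finrank_mono (span_le.mpr ?_)
    rintro _ ⟨q, rfl⟩
    exact hcol q
  have hVlt : Module.finrank ℝ V < n := by
    have := Submodule.finrank_lt (K := ℝ) (V := Fin n → ℝ) hV
    rwa [Module.finrank_pi, Fintype.card_fin] at this
  rw [hcont] at hrank
  omega

lemma good_step (w : ℕ → Fin m → ℝ) (wt : Fin m → ℝ) (t : ℕ)
    (hLI : LinearIndependent ℝ (fun i : Fin t => zcol A B x0 w i))
    (hwt : Sum.elim (traj A B x0 w t) wt ∉ Scols A B x0 w t)
    (hinv : Vst A B x0 w (t + 1) = ⊤ ∨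
      A.mulVec (traj A B x0 w t) + B.mulVec wt ∉ Vst A B x0 w (t + 1)) :
    GoodW A B x0 (fun s => if s = t then wt else w s) (t + 1) := by
  set w' : ℕ → Fin m → ℝ := fun s => if s = t then wt else w s with hw'
  have hagree : ∀ s, s ≤ t → traj A B x0 w' s = traj A B x0 w s := by
    intro s hs
    exact (traj_congr A B x0 w w' s (fun r hr => by
      simp only [hw']
      rw [if_neg (by omega)])).symm
  have hfam : (fun i : Fin (t + 1) => zcol A B x0 w' i) =
      Fin.snoc (fun i : Fin t => zcol A B x0 w i)
        (Sum.elim (traj A B x0 w t) wt) := by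
    funext i
    refine Fin.lastCases ?_ ?_ i
    · rw [Fin.snoc_last]
      show zcol A B x0 w' ↑(Fin.last t) = _
      rw [Fin.val_last, zcol, hagree t le_rfl]
      simp [hw']
    · intro j
      rw [Fin.snoc_castSucc]
      show zcol A B x0 w' ↑(Fin.castSucc j) = zcol A B x0 w ↑j
      rw [Fin.coe_castSucc, zcol, zcol, hagree j (le_of_lt j.isLt)]
      have : w' ↑j = w ↑j := by
        simp only [hw']
        rw [if_neg (by omega)]
      rw [this]
  have hVeq : Vst A B x0 w' (t + 1) = Vst A B x0 w (t + 1) := by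
    have e : (fun i : Fin (t + 1) => traj A B x0 w' ↑i) =
        fun i : Fin (t + 1) => traj A B x0 w ↑i :=
      funext fun i => hagree ↑i (by omega)
    rw [Vst, Vst, e]
  have htraj : traj A B x0 w' (t + 1) = A.mulVec (traj A B x0 w t) + B.mulVec wt := by
    rw [traj, hagree t le_rfl]
    simp [hw']
  constructor
  · rw [hfam]
    exact linearIndependent_fin_snoc.mpr ⟨hLI, hwt⟩
  · rcases hinv with h | h
    · exact Or.inr (Or.inl (by rw [hVeq]; exact h))
    · exact Or.inr (Or.inr (by rw [hVeq, htraj]; exact h))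

lemma main_exists (hn : 0 < n) (hm : 0 < m) (hcont : Controllable A B) :
    ∀ t, t ≤ n + m → ∃ w : ℕ → Fin m → ℝ, GoodW A B x0 w t := by
  intro t
  induction t with
  | zero =>
    intro _
    exact ⟨fun _ _ => 0, linearIndependent_empty_type, Or.inl rfl⟩
  | succ t ih =>
    intro ht
    obtain ⟨w, hLI, hinv⟩ := ih (by omega)
    have ea := exists_a A B x0 hm w t (by omega) hLI hinv
    by_cases hV : Vst A B x0 w (t + 1) = ⊤
    · obtain ⟨wt, hwt⟩ := ea
      exact ⟨_, good_step A B x0 w wt t hLI hwt (Or.inl hV)⟩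
    · have eb := exists_b A B x0 hcont w t hV
      have key : ∀ v : Fin m → ℝ,
          Sum.elim (traj A B x0 w t) v = Sum.elim (traj A B x0 w t) 0 + inrL (n := n) v := by
        intro v; funext q; cases q <;> simp [inrL]
      have hf : ∃ a, Sum.elim (traj A B x0 w t) 0 + inrL (n := n) a ∉ Scols A B x0 w t := by
        obtain ⟨a, ha⟩ := ea
        exact ⟨a, by rw [← key]; exact ha⟩
      have hg : ∃ b, A.mulVec (traj A B x0 w t) + B.mulVecLin b ∉ Vst A B x0 w (t + 1) := by
        obtain ⟨b, hb⟩ := eb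
        exact ⟨b, by simpa using hb⟩
      obtain ⟨wt, h1, h2⟩ := avoid_two (inrL (n := n)) B.mulVecLin
        (Sum.elim (traj A B x0 w t) 0) (A.mulVec (traj A B x0 w t))
        (Scols A B x0 w t) (Vst A B x0 w (t + 1)) hf hg
      refine ⟨_, good_step A B x0 w wt t hLI ?_ (Or.inr ?_)⟩
      · rw [key]; exact h1
      · simpa using h2

end Stmt17Aux

/-- For a controllable `(A,B)` and any initial state `x₀`, there exists
data of length `T = n + m` consistent with `(A,B)`, starting at `x₀`, such that
`[X₋; U₋]` has rank `n + m`; in particular, the data is `Σ_cont`-informative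
for identification. -/
theorem stmt_17 {n m : ℕ} (hn : 0 < n) (hm : 0 < m)
    (A : Matrix (Fin n) (Fin n) ℝ) (B : Matrix (Fin n) (Fin m) ℝ)
    (hcont : Controllable A B) (x0 : Fin n → ℝ) :
    ∃ (u : Fin (n + m) → Fin m → ℝ) (x : Fin (n + m + 1) → Fin n → ℝ),
      Consistent A B u x ∧ x 0 = x0 ∧
      (stacked (Xminus x) (Uminus u)).rank = n + m ∧
      InfId (SigmaCont n m) u x := by
  classical
  open Stmt17Aux in
  obtain ⟨w, hLI, -⟩ := main_exists A B x0 hn hm hcont (n + m) le_rfl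
  set u : Fin (n + m) → Fin m → ℝ := fun t => w ↑t with hu
  set x : Fin (n + m + 1) → Fin n → ℝ := fun t => traj A B x0 w ↑t with hx
  have hcons : Consistent A B u x := by
    intro t
    show traj A B x0 w ↑(t.succ) = A.mulVec (traj A B x0 w ↑(t.castSucc)) + B.mulVec (w ↑t)
    rw [Fin.val_succ, Fin.coe_castSucc, traj]
  have hMT : (stacked (Xminus x) (Uminus u))ᵀ =
      fun j : Fin (n + m) => zcol A B x0 w ↑j := by
    funext j q
    cases q with
    | inl i => rfl
    | inr k => rfl
  have hLI' : LinearIndependent ℝ (fun j : Fin (n + m) => zcol A B x0 w ↑j) := hLI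
  have hrank : (stacked (Xminus x) (Uminus u)).rank = n + m := by
    rw [Matrix.rank, Matrix.range_mulVecLin, show (stacked (Xminus x) (Uminus u)).col = _ from hMT, finrank_span_eq_card hLI',
      Fintype.card_fin]
  have htop : Submodule.span ℝ (Set.range fun j : Fin (n + m) => zcol A B x0 w ↑j) = ⊤ := by
    apply Submodule.eq_top_of_finrank_eq
    rw [finrank_span_eq_card hLI', Fintype.card_fin, Module.finrank_pi]
    simp
  have hzero : ∀ y : (Fin n ⊕ Fin m) → ℝ,
      (∀ t : Fin (n + m), y ⬝ᵥ zcol A B x0 w ↑t = 0) → y = 0 := by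
    intro y hy
    have hall : ∀ v ∈ Submodule.span ℝ
        (Set.range fun j : Fin (n + m) => zcol A B x0 w ↑j), y ⬝ᵥ v = 0 := by
      intro v hv
      induction hv using Submodule.span_induction with
      | mem v hv =>
        obtain ⟨t, rfl⟩ := hv
        exact hy t
      | zero => exact dotProduct_zero y
      | add a b _ _ ha hb => rw [dotProduct_add, ha, hb, add_zero]
      | smul c a _ ha => rw [dotProduct_smul, ha, smul_zero]
    have hyy := hall y (by rw [htop]; trivial)
    exact dotProduct_self_eq_zero.mp hyy
  refine ⟨u, x, hcons, rfl, hrank, (A, B), ?_⟩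
  apply Set.eq_singleton_iff_unique_mem.mpr
  constructor
  · exact ⟨hcons, hcont⟩
  · rintro ⟨A', B'⟩ ⟨hcons', -⟩
    have key : ∀ i : Fin n,
        Sum.elim (fun j => A' i j - A i j) (fun k => B' i k - B i k) =
          (0 : (Fin n ⊕ Fin m) → ℝ) := by
      intro i
      apply hzero
      intro t
      have h1 := congr_fun (hcons' t) i
      have h2 := congr_fun (hcons t) i
      have h3 :
          (A'.mulVec (x t.castSucc) + B'.mulVec (u t)) i =
          (A.mulVec (x t.castSucc) + B.mulVec (u t)) i := by
        rw [← h1, ← h2]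
      have hxt : x t.castSucc = traj A B x0 w ↑t := by
        rw [hx]; simp [Fin.coe_castSucc]
      rw [hxt] at h3
      simp only [Pi.add_apply, Matrix.mulVec, dotProduct] at h3
      show (Sum.elim (fun j => A' i j - A i j) (fun k => B' i k - B i k)) ⬝ᵥ
        Sum.elim (traj A B x0 w ↑t) (w ↑t) = 0
      rw [sumElim_dotProduct_sumElim]
      simp only [dotProduct, sub_mul, Finset.sum_sub_distrib]
      have hut : u t = w ↑t := rfl
      rw [hut] at h3
      linarith [h3]
    have hA : A' = A := by
      ext i j
      have := congr_fun (key i) (Sum.inl j)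
      simpa [sub_eq_zero] using this
    have hB : B' = B := by
      ext i k
      have := congr_fun (key i) (Sum.inr k)
      simpa [sub_eq_zero] using this
    rw [hA, hB]
end

section
/- Let (A,B) be stabilizable and let x_0 ∈ ℝ^n. Then there exists input-state data D = (u,x) of length T = dim R(A,[B x_0]) + m consistent with (A,B) with x(0) = x_0 such that D is Σ_stab-informative for stabilization, where [B x_0] is the n×(m+1) matrix obtained by appending x_0 to B. -/
open Matrix

namespace Stmt18Aux

lemma sum_mulVec {ι : Type*} (s : Finset ι) {a b : ℕ} (f : ι → Matrix (Fin a) (Fin b) ℝ)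
    (v : Fin b → ℝ) : (∑ i ∈ s, f i) *ᵥ v = ∑ i ∈ s, f i *ᵥ v := by
  induction s using Finset.cons_induction with
  | empty => simp [Matrix.zero_mulVec]
  | cons i s his ih => simp [Finset.sum_cons, Matrix.add_mulVec, ih]

lemma cayley {k : ℕ} (A : Matrix (Fin k) (Fin k) ℝ) :
    A ^ k = ∑ i ∈ Finset.range k, (-(A.charpoly.coeff i)) • A ^ i := by
  have h0 := Matrix.aeval_self_charpoly A
  rw [Polynomial.aeval_eq_sum_range, Matrix.charpoly_natDegree_eq_dim, Fintype.card_fin,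
    Finset.sum_range_succ] at h0
  have hc : A.charpoly.coeff k = 1 := by
    have h1 := (Matrix.charpoly_monic A).coeff_natDegree
    rwa [Matrix.charpoly_natDegree_eq_dim, Fintype.card_fin] at h1
  rw [hc, one_smul] at h0
  have h2 : A ^ k = -(∑ i ∈ Finset.range k, A.charpoly.coeff i • A ^ i) :=
    eq_neg_of_add_eq_zero_right h0
  rw [h2, ← Finset.sum_neg_distrib]
  exact Finset.sum_congr rfl fun i _ => (neg_smul _ _).symm


section Reach
variable {n m : ℕ} (hn : 0 < n) (A : Matrix (Fin n) (Fin n) ℝ) (B : Matrix (Fin n) (Fin m) ℝ)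
  (x0 : Fin n → ℝ)

local notation "C" => augCol B x0
local notation "V" => colSpan (reachMat A C)

lemma reach_mulVec (w : Fin n × (Fin m ⊕ Fin 1) → ℝ) :
    (reachMat A C) *ᵥ w = ∑ k : Fin n, ((A ^ (k : ℕ) * C) *ᵥ fun p => w (k, p)) := by
  funext i
  simp only [Matrix.mulVec, dotProduct, reachMat, Matrix.of_apply, Finset.sum_apply]
  rw [← Finset.sum_product']
  rfl

lemma mem_V_iff (v : Fin n → ℝ) : v ∈ V ↔ ∃ w, (reachMat A C) *ᵥ w = v := by
  simp [colSpan, LinearMap.mem_range, Matrix.mulVecLin_apply]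

lemma pow_mul_mem (k : Fin n) (z : (Fin m ⊕ Fin 1) → ℝ) :
    (A ^ (k : ℕ) * C) *ᵥ z ∈ V := by
  rw [mem_V_iff]
  refine ⟨fun q => if q.1 = k then z q.2 else 0, ?_⟩
  rw [reach_mulVec]
  rw [Finset.sum_eq_single k]
  · simp
  · intro b _ hb
    have : (fun p => if b = k then z p else 0) = (0 : (Fin m ⊕ Fin 1) → ℝ) := by
      funext p; simp [hb]
    rw [this, Matrix.mulVec_zero]
  · simp

lemma mulVec_sum {ι : Type*} (s : Finset ι) {a b : ℕ} (M : Matrix (Fin a) (Fin b) ℝ)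
    (v : ι → Fin b → ℝ) : M *ᵥ (∑ i ∈ s, v i) = ∑ i ∈ s, M *ᵥ v i := by
  induction s using Finset.cons_induction with
  | empty => simp [Matrix.mulVec_zero]
  | cons i s his ih => simp [Finset.sum_cons, Matrix.mulVec_add, ih]

lemma C_mulVec_mem (hn : 0 < n) (z : (Fin m ⊕ Fin 1) → ℝ) : C *ᵥ z ∈ V := by
  have h := pow_mul_mem A B x0 ⟨0, hn⟩ z
  simpa using h

lemma pow_mem (hn : 0 < n) : ∀ (j : ℕ) (z : (Fin m ⊕ Fin 1) → ℝ), (A ^ j) *ᵥ (C *ᵥ z) ∈ V := by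
  intro j
  induction j using Nat.strong_induction_on with
  | _ j ih =>
    intro z
    by_cases hj : j < n
    · have := pow_mul_mem A B x0 ⟨j, hj⟩ z
      rwa [← Matrix.mulVec_mulVec] at this
    · push_neg at hj
      have e1 : A ^ j *ᵥ (C *ᵥ z) = A ^ (j - n) *ᵥ ((A ^ n) *ᵥ (C *ᵥ z)) := by
        rw [Matrix.mulVec_mulVec (C *ᵥ z) (A ^ (j - n)) (A ^ n), ← pow_add,
          Nat.sub_add_cancel hj]
      have e2 : (A ^ n) *ᵥ (C *ᵥ z)
          = ∑ i ∈ Finset.range n, (-(A.charpoly.coeff i)) • (A ^ i *ᵥ (C *ᵥ z)) := by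
        rw [cayley A, sum_mulVec]
        exact Finset.sum_congr rfl fun i _ => Matrix.smul_mulVec _ _ _
      rw [e1, e2, mulVec_sum]
      apply Submodule.sum_mem
      intro i hi
      rw [Matrix.mulVec_smul]
      apply Submodule.smul_mem
      rw [Matrix.mulVec_mulVec, ← pow_add]
      exact ih (j - n + i) (by simp only [Finset.mem_range] at hi; omega) z

lemma x0_mem (hn : 0 < n) : x0 ∈ V := by
  have h := C_mulVec_mem A B x0 hn (Sum.elim 0 fun _ => (1:ℝ))
  rw [augCol, Matrix.fromCols_mulVec_sumElim] at h
  have e : (Matrix.of fun i (_ : Fin 1) => x0 i) *ᵥ (fun _ => (1:ℝ)) = x0 := by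
    funext i; simp [Matrix.mulVec, dotProduct]
  rwa [Matrix.mulVec_zero, zero_add, e] at h

lemma B_mem (hn : 0 < n) (u : Fin m → ℝ) : B *ᵥ u ∈ V := by
  have h := C_mulVec_mem A B x0 hn (Sum.elim u 0)
  rwa [augCol, Matrix.fromCols_mulVec_sumElim, Matrix.mulVec_zero, add_zero] at h

lemma A_mem (hn : 0 < n) (v : Fin n → ℝ) (hv : v ∈ V) : A *ᵥ v ∈ V := by
  rw [mem_V_iff] at hv
  obtain ⟨w, rfl⟩ := hv
  rw [reach_mulVec, mulVec_sum]
  apply Submodule.sum_mem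
  intro k _
  rw [← Matrix.mulVec_mulVec, Matrix.mulVec_mulVec _ A (A ^ (k:ℕ)), ← pow_succ']
  exact pow_mem A B x0 hn _ _

lemma C_decomp (z : (Fin m ⊕ Fin 1) → ℝ) :
    C *ᵥ z = B *ᵥ (z ∘ Sum.inl) + (z (Sum.inr 0)) • x0 := by
  conv_lhs => rw [← Sum.elim_comp_inl_inr z]
  rw [augCol, Matrix.fromCols_mulVec_sumElim]
  congr 1
  funext i
  simp [Matrix.mulVec, dotProduct, mul_comm]

lemma V_min (hn : 0 < n) (U : Submodule ℝ (Fin n → ℝ)) (hx0 : x0 ∈ U)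
    (hB : ∀ u, B *ᵥ u ∈ U) (hA : ∀ v ∈ U, A *ᵥ v ∈ U) : V ≤ U := by
  intro v hv
  rw [mem_V_iff] at hv
  obtain ⟨w, rfl⟩ := hv
  rw [reach_mulVec]
  apply Submodule.sum_mem
  intro k _
  rw [← Matrix.mulVec_mulVec]
  have hC : ∀ z, C *ᵥ z ∈ U := by
    intro z
    rw [C_decomp]
    exact U.add_mem (hB _) (U.smul_mem _ hx0)
  have : ∀ (j : ℕ) (y : Fin n → ℝ), y ∈ U → A ^ j *ᵥ y ∈ U := by
    intro j
    induction j with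
    | zero => intro y hy; simpa [Matrix.one_mulVec] using hy
    | succ j ihj =>
      intro y hy
      rw [pow_succ', ← Matrix.mulVec_mulVec]
      exact hA _ (ihj y hy)
  exact this _ _ (hC _)

end Reach

section Constr
variable {n m : ℕ} (A : Matrix (Fin n) (Fin n) ℝ) (B : Matrix (Fin n) (Fin m) ℝ)
  (x0 : Fin n → ℝ)

open Classical in
/-- greedy input choice -/
noncomputable def pick (xt : Fin n → ℝ) (Xs : Submodule ℝ (Fin n → ℝ))
    (Ss : Submodule ℝ ((Fin n ⊕ Fin m) → ℝ)) : Fin m → ℝ :=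
  if h : ∃ u, A *ᵥ xt + B *ᵥ u ∉ Xs then h.choose
  else if h2 : ∃ w, (Sum.elim xt w : (Fin n ⊕ Fin m) → ℝ) ∉ Ss then h2.choose else 0

lemma pick_spec1 {xt Xs Ss} (h : ∃ u, A *ᵥ xt + B *ᵥ u ∉ Xs) :
    A *ᵥ xt + B *ᵥ (pick A B xt Xs Ss) ∉ Xs := by
  rw [pick, dif_pos h]
  exact h.choose_spec

lemma pick_spec2 {xt Xs Ss} (h : ¬ ∃ u, A *ᵥ xt + B *ᵥ u ∉ Xs)
    (h2 : ∃ w, (Sum.elim xt w : (Fin n ⊕ Fin m) → ℝ) ∉ Ss) :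
    (Sum.elim xt (pick A B xt Xs Ss) : (Fin n ⊕ Fin m) → ℝ) ∉ Ss := by
  rw [pick, dif_neg h, dif_pos h2]
  exact h2.choose_spec

/-- history of the experiment -/
noncomputable def hist : ℕ → ((Fin n → ℝ) × (Fin m → ℝ))
  | 0 => (x0, pick A B x0 (Submodule.span ℝ {x0}) ⊥)
  | (t+1) =>
      (A *ᵥ (hist t).1 + B *ᵥ (hist t).2,
        pick A B (A *ᵥ (hist t).1 + B *ᵥ (hist t).2)
          (Submodule.span ℝ (Set.range (fun s : Fin (t+1) => (hist s.val).1)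
            ∪ {A *ᵥ (hist t).1 + B *ᵥ (hist t).2}))
          (Submodule.span ℝ
            (Set.range (fun s : Fin (t+1) => Sum.elim (hist s.val).1 (hist s.val).2))))
  termination_by t => t
  decreasing_by all_goals (first | exact s.isLt | omega)

noncomputable def xs (t : ℕ) : Fin n → ℝ := (hist A B x0 t).1
noncomputable def us (t : ℕ) : Fin m → ℝ := (hist A B x0 t).2
noncomputable def colv (t : ℕ) : (Fin n ⊕ Fin m) → ℝ := Sum.elim (xs A B x0 t) (us A B x0 t)
noncomputable def XspLe (t : ℕ) : Submodule ℝ (Fin n → ℝ) :=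
  Submodule.span ℝ (xs A B x0 '' Set.Iic t)
noncomputable def Scols (t : ℕ) : Submodule ℝ ((Fin n ⊕ Fin m) → ℝ) :=
  Submodule.span ℝ (colv A B x0 '' Set.Iio t)

lemma xs_zero : xs A B x0 0 = x0 := by rw [xs, hist]

lemma xs_succ' (t : ℕ) :
    A *ᵥ (hist A B x0 t).1 + B *ᵥ (hist A B x0 t).2 = xs A B x0 (t+1) := by
  rw [xs, hist]

lemma xs_succ (t : ℕ) : xs A B x0 (t+1) = A *ᵥ xs A B x0 t + B *ᵥ us A B x0 t :=
  (xs_succ' A B x0 t).symm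

lemma set_le (t : ℕ) (f : ℕ → (Fin n → ℝ)) :
    Set.range (fun s : Fin (t+1) => f s.val) ∪ {f (t+1)} = f '' Set.Iic (t+1) := by
  ext y
  simp only [Set.mem_union, Set.mem_range, Set.mem_singleton_iff, Set.mem_image, Set.mem_Iic]
  constructor
  · rintro (⟨s, rfl⟩ | rfl)
    · exact ⟨s.val, by omega, rfl⟩
    · exact ⟨t+1, le_refl _, rfl⟩
  · rintro ⟨s, hs, rfl⟩
    rcases Nat.lt_or_ge s (t+1) with h | h
    · exact Or.inl ⟨⟨s, h⟩, rfl⟩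
    · have : s = t + 1 := by omega
      exact Or.inr (by rw [this])

lemma set_lt (t : ℕ) (f : ℕ → ((Fin n ⊕ Fin m) → ℝ)) :
    Set.range (fun s : Fin t => f s.val) = f '' Set.Iio t := by
  ext y
  simp only [Set.mem_range, Set.mem_image, Set.mem_Iio]
  exact ⟨fun ⟨s, hs⟩ => ⟨s.val, s.isLt, hs⟩, fun ⟨s, hs, h⟩ => ⟨⟨s, hs⟩, h⟩⟩

lemma XspLe_zero : XspLe A B x0 0 = Submodule.span ℝ {x0} := by
  rw [XspLe]
  congr 1
  ext y
  simp only [Set.mem_image, Set.mem_Iic, Nat.le_zero, Set.mem_singleton_iff]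
  constructor
  · rintro ⟨s, hs, hxy⟩
    rw [hs, xs_zero] at hxy
    exact hxy.symm
  · intro hy
    exact ⟨0, rfl, by rw [xs_zero, hy]⟩

lemma Scols_zero : Scols A B x0 0 = ⊥ := by
  rw [Scols]
  have : colv A B x0 '' Set.Iio 0 = ∅ := by
    have : Set.Iio 0 = (∅ : Set ℕ) := by ext y; simp
    rw [this, Set.image_empty]
  rw [this, Submodule.span_empty]

lemma us_eq (t : ℕ) :
    us A B x0 t = pick A B (xs A B x0 t) (XspLe A B x0 t) (Scols A B x0 t) := by
  cases t with
  | zero => rw [us, hist, XspLe_zero, Scols_zero, xs_zero]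
  | succ t =>
    rw [us, hist]
    have h1 : Set.range (fun s : Fin (t+1) => (hist A B x0 s.val).1)
        ∪ {A *ᵥ (hist A B x0 t).1 + B *ᵥ (hist A B x0 t).2}
        = xs A B x0 '' Set.Iic (t+1) := by
      rw [← set_le t (xs A B x0), xs_succ']
      rfl
    have h2 : Set.range (fun s : Fin (t+1) => Sum.elim (hist A B x0 s.val).1 (hist A B x0 s.val).2)
        = colv A B x0 '' Set.Iio (t+1) := set_lt (t+1) (colv A B x0)
    rw [h1, h2, xs_succ']
    rfl


/-- the linear map `v ↦ (v, 0)` -/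
def inlL : (Fin n → ℝ) →ₗ[ℝ] ((Fin n ⊕ Fin m) → ℝ) where
  toFun v := Sum.elim v 0
  map_add' a b := by funext i; cases i <;> simp
  map_smul' c a := by funext i; cases i <;> simp

/-- the projection `(v,w) ↦ v` -/
noncomputable def prN : ((Fin n ⊕ Fin m) → ℝ) →ₗ[ℝ] (Fin n → ℝ) :=
  LinearMap.funLeft ℝ ℝ Sum.inl

lemma mono_XspLe {s t : ℕ} (h : s ≤ t) : XspLe A B x0 s ≤ XspLe A B x0 t :=
  Submodule.span_mono (Set.image_mono (Set.Iic_subset_Iic.2 h))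

lemma mono_Scols {s t : ℕ} (h : s ≤ t) : Scols A B x0 s ≤ Scols A B x0 t :=
  Submodule.span_mono (Set.image_mono (Set.Iio_subset_Iio h))

lemma xs_mem_XspLe {s t : ℕ} (h : s ≤ t) : xs A B x0 s ∈ XspLe A B x0 t :=
  Submodule.subset_span ⟨s, h, rfl⟩

lemma colv_mem_Scols {s t : ℕ} (h : s < t) : colv A B x0 s ∈ Scols A B x0 t :=
  Submodule.subset_span ⟨s, h, rfl⟩

/-- state-greedy is stuck at time `t` -/
def stP (t : ℕ) : Prop := ∀ u, A *ᵥ xs A B x0 t + B *ᵥ u ∈ XspLe A B x0 t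

lemma A_xs_t_mem {t : ℕ} (hst : stP A B x0 t) : A *ᵥ xs A B x0 t ∈ XspLe A B x0 t := by
  have h0 := hst 0
  rwa [Matrix.mulVec_zero, add_zero] at h0

lemma B_mem_XspLe {t : ℕ} (hst : stP A B x0 t) (u : Fin m → ℝ) :
    B *ᵥ u ∈ XspLe A B x0 t := by
  have := sub_mem (hst u) (A_xs_t_mem A B x0 hst)
  rwa [add_sub_cancel_left] at this

lemma A_xs_mem {t : ℕ} (hst : stP A B x0 t) {s : ℕ} (hs : s ≤ t) :
    A *ᵥ xs A B x0 s ∈ XspLe A B x0 t := by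
  rcases eq_or_lt_of_le hs with rfl | hlt
  · exact A_xs_t_mem A B x0 hst
  · have he : A *ᵥ xs A B x0 s = xs A B x0 (s+1) - B *ᵥ us A B x0 s := by
      rw [xs_succ]; abel
    rw [he]
    exact sub_mem (xs_mem_XspLe A B x0 hlt) (B_mem_XspLe A B x0 hst _)

noncomputable def comapEquiv (V : Submodule ℝ (Fin n → ℝ)) :
    (Submodule.comap (prN (n := n) (m := m)) V) ≃ₗ[ℝ] (V × (Fin m → ℝ)) where
  toFun z := (⟨(z : (Fin n ⊕ Fin m) → ℝ) ∘ Sum.inl, z.2⟩, (z : (Fin n ⊕ Fin m) → ℝ) ∘ Sum.inr)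
  map_add' a b := by
    refine Prod.ext (Subtype.ext ?_) ?_ <;> funext i <;> rfl
  map_smul' c a := by
    refine Prod.ext (Subtype.ext ?_) ?_ <;> funext i <;> rfl
  invFun p := ⟨Sum.elim (p.1 : Fin n → ℝ) p.2, by
    have he : prN (Sum.elim (p.1 : Fin n → ℝ) p.2) = (p.1 : Fin n → ℝ) := by funext i; rfl
    rw [Submodule.mem_comap, he]
    exact p.1.2⟩
  left_inv z := by
    apply Subtype.ext
    funext i
    cases i <;> rfl
  right_inv p := by
    refine Prod.ext (Subtype.ext ?_) ?_ <;> funext i <;> rfl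

lemma finrank_comap (V : Submodule ℝ (Fin n → ℝ)) :
    Module.finrank ℝ (Submodule.comap (prN (n := n) (m := m)) V)
      = Module.finrank ℝ V + m := by
  rw [LinearEquiv.finrank_eq (comapEquiv V), Module.finrank_prod, Module.finrank_pi,
    Fintype.card_fin]

section WithV
variable (V : Submodule ℝ (Fin n → ℝ)) (hx0 : x0 ∈ V) (hB : ∀ u, B *ᵥ u ∈ V)
  (hA : ∀ v ∈ V, A *ᵥ v ∈ V)
  (hmin : ∀ U : Submodule ℝ (Fin n → ℝ), x0 ∈ U → (∀ u, B *ᵥ u ∈ U) →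
    (∀ v ∈ U, A *ᵥ v ∈ U) → V ≤ U)

include hmin in
lemma st_V {t : ℕ} (hst : stP A B x0 t) : V ≤ XspLe A B x0 t := by
  apply hmin
  · have h := xs_mem_XspLe A B x0 (Nat.zero_le t)
    rwa [xs_zero] at h
  · exact B_mem_XspLe A B x0 hst
  · intro v hv
    have hle : XspLe A B x0 t ≤ Submodule.comap (A.mulVecLin) (XspLe A B x0 t) := by
      rw [XspLe]
      apply Submodule.span_le.2
      rintro y ⟨s, hs, rfl⟩
      simp only [SetLike.mem_coe, Submodule.mem_comap, Matrix.mulVecLin_apply]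
      exact A_xs_mem A B x0 hst (Set.mem_Iic.1 hs)
    have hv' := hle hv
    rwa [Submodule.mem_comap, Matrix.mulVecLin_apply] at hv'

include hx0 hB hA in
lemma xs_mem_V : ∀ t, xs A B x0 t ∈ V := by
  intro t
  induction t with
  | zero => rw [xs_zero]; exact hx0
  | succ t ih => rw [xs_succ]; exact add_mem (hA _ ih) (hB _)

include hx0 hB hA hmin in
lemma st_succ {t : ℕ} (hst : stP A B x0 t) : stP A B x0 (t+1) := by
  intro u
  have h1 : xs A B x0 (t+1) ∈ V := xs_mem_V A B x0 V hx0 hB hA _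
  have h2 : A *ᵥ xs A B x0 (t+1) + B *ᵥ u ∈ V := add_mem (hA _ h1) (hB u)
  exact mono_XspLe A B x0 (Nat.le_succ t) (st_V A B x0 V hmin hst h2)

lemma col_notmem_succ {s : ℕ} (h : xs A B x0 (s+1) ∉ XspLe A B x0 s) :
    colv A B x0 (s+1) ∉ Scols A B x0 (s+1) := by
  intro hc
  have hS : Scols A B x0 (s+1) ≤ Submodule.comap (prN) (XspLe A B x0 s) := by
    rw [Scols]
    apply Submodule.span_le.2
    rintro y ⟨r, hr, rfl⟩
    have hr' : r ≤ s := Nat.lt_succ_iff.1 (Set.mem_Iio.1 hr)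
    simp only [SetLike.mem_coe, Submodule.mem_comap]
    have he : prN (colv A B x0 r) = xs A B x0 r := by
      funext i; rfl
    rw [he]
    exact xs_mem_XspLe A B x0 hr'
  apply h
  have := hS hc
  have he : prN (colv A B x0 (s+1)) = xs A B x0 (s+1) := by funext i; rfl
  rwa [Submodule.mem_comap, he] at this

lemma grow {t : ℕ} (h : colv A B x0 t ∉ Scols A B x0 t) :
    Module.finrank ℝ (Scols A B x0 t) + 1 ≤ Module.finrank ℝ (Scols A B x0 (t+1)) := by
  have hlt : Scols A B x0 t < Scols A B x0 (t+1) := by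
    refine lt_of_le_of_ne (mono_Scols A B x0 (Nat.le_succ t)) fun he => h ?_
    rw [he]
    exact colv_mem_Scols A B x0 (Nat.lt_succ_self t)
  exact Submodule.finrank_lt_finrank_of_lt hlt

include hmin in
lemma stuck {t : ℕ} (hst : stP A B x0 t)
    (h2 : ∀ w, (Sum.elim (xs A B x0 t) w : (Fin n ⊕ Fin m) → ℝ) ∈ Scols A B x0 t) :
    Submodule.comap (prN) V ≤ Scols A B x0 t := by
  have h0m : ∀ w : Fin m → ℝ, (Sum.elim (0 : Fin n → ℝ) w : (Fin n ⊕ Fin m) → ℝ) ∈ Scols A B x0 t := by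
    intro w
    have hs := sub_mem (h2 w) (h2 0)
    have he : (Sum.elim (xs A B x0 t) w - Sum.elim (xs A B x0 t) (0 : Fin m → ℝ) : (Fin n ⊕ Fin m) → ℝ)
        = Sum.elim (0 : Fin n → ℝ) w := by
      funext i; cases i <;> simp
    rwa [he] at hs
  have hx' : ∀ s ≤ t, (Sum.elim (xs A B x0 s) (0 : Fin m → ℝ) : (Fin n ⊕ Fin m) → ℝ) ∈ Scols A B x0 t := by
    intro s hs
    rcases eq_or_lt_of_le hs with rfl | hlt
    · exact h2 0
    · have hsub := sub_mem (colv_mem_Scols A B x0 hlt) (h0m (us A B x0 s))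
      have he : (colv A B x0 s - Sum.elim (0 : Fin n → ℝ) (us A B x0 s) : (Fin n ⊕ Fin m) → ℝ)
          = Sum.elim (xs A B x0 s) (0 : Fin m → ℝ) := by
        rw [colv]; funext i; cases i <;> simp
      rwa [he] at hsub
  have hVle : V ≤ XspLe A B x0 t := st_V A B x0 V hmin hst
  have hinl : ∀ v ∈ XspLe A B x0 t, (Sum.elim v (0 : Fin m → ℝ) : (Fin n ⊕ Fin m) → ℝ) ∈ Scols A B x0 t := by
    intro v hv
    have hle : XspLe A B x0 t ≤ Submodule.comap (inlL (n := n) (m := m)) (Scols A B x0 t) := by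
      rw [XspLe]
      apply Submodule.span_le.2
      rintro y ⟨s, hs, rfl⟩
      simp only [SetLike.mem_coe, Submodule.mem_comap]
      exact hx' s (Set.mem_Iic.1 hs)
    exact hle hv
  intro z hz
  have hdz : z = (Sum.elim (z ∘ Sum.inl) (0 : Fin m → ℝ) + Sum.elim (0 : Fin n → ℝ) (z ∘ Sum.inr) : (Fin n ⊕ Fin m) → ℝ) := by
    funext i; cases i <;> simp
  rw [hdz]
  exact add_mem (hinl _ (hVle hz)) (h0m _)

include hx0 hB hA hmin in
lemma mono' (t : ℕ) : Submodule.comap (prN) V ≤ Scols A B x0 (t+1) ∨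
    Module.finrank ℝ (Scols A B x0 t) + 1 ≤ Module.finrank ℝ (Scols A B x0 (t+1)) := by
  by_cases hst : stP A B x0 t
  · by_cases h2 : ∀ w, (Sum.elim (xs A B x0 t) w : (Fin n ⊕ Fin m) → ℝ) ∈ Scols A B x0 t
    · left
      exact (stuck A B x0 V hmin hst h2).trans (mono_Scols A B x0 (Nat.le_succ t))
    · right
      apply grow
      push_neg at h2
      have hnot : ¬ ∃ u, A *ᵥ xs A B x0 t + B *ᵥ u ∉ XspLe A B x0 t := by
        push_neg
        exact hst
      have hp := pick_spec2 A B (Ss := Scols A B x0 t) hnot h2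
      rw [colv, us_eq]
      exact hp
  · cases t with
    | zero =>
      right
      apply grow
      rw [Scols_zero]
      simp only [Submodule.mem_bot]
      intro hc0
      have hx : xs A B x0 0 = 0 := funext fun i => congrFun hc0 (Sum.inl i)
      have hu : us A B x0 0 = 0 := funext fun i => congrFun hc0 (Sum.inr i)
      have hex : ∃ u, A *ᵥ xs A B x0 0 + B *ᵥ u ∉ XspLe A B x0 0 := by
        rw [stP] at hst
        push_neg at hst
        exact hst
      have hp := pick_spec1 A B (Ss := Scols A B x0 0) hex
      rw [← us_eq, hx, hu] at hp
      simp only [Matrix.mulVec_zero, add_zero] at hp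
      exact hp (zero_mem _)
    | succ s =>
      right
      apply grow
      apply col_notmem_succ
      have hsts : ¬ stP A B x0 s := fun h => hst (st_succ A B x0 V hx0 hB hA hmin h)
      have hex : ∃ u, A *ᵥ xs A B x0 s + B *ᵥ u ∉ XspLe A B x0 s := by
        rw [stP] at hsts
        push_neg at hsts
        exact hsts
      have hp := pick_spec1 A B (Ss := Scols A B x0 s) hex
      rw [← us_eq] at hp
      rw [xs_succ]
      exact hp

include hx0 hB hA hmin in
lemma count (t : ℕ) :
    Submodule.comap (prN) V ≤ Scols A B x0 t ∨ t ≤ Module.finrank ℝ (Scols A B x0 t) := by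
  induction t with
  | zero => right; exact Nat.zero_le _
  | succ t ih =>
    rcases ih with h | h
    · left
      exact h.trans (mono_Scols A B x0 (Nat.le_succ t))
    · rcases mono' A B x0 V hx0 hB hA hmin t with h' | h'
      · left; exact h'
      · right; omega

include hx0 hB hA hmin in
lemma span_final :
    Scols A B x0 (Module.finrank ℝ V + m) = Submodule.comap (prN) V := by
  have hle : Scols A B x0 (Module.finrank ℝ V + m) ≤ Submodule.comap (prN) V := by
    rw [Scols]
    apply Submodule.span_le.2
    rintro y ⟨s, hs, rfl⟩
    simp only [SetLike.mem_coe, Submodule.mem_comap]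
    have he : prN (colv A B x0 s) = xs A B x0 s := by funext i; rfl
    rw [he]
    exact xs_mem_V A B x0 V hx0 hB hA s
  have hfr : Module.finrank ℝ (Submodule.comap (prN (n := n) (m := m)) V)
      = Module.finrank ℝ V + m := finrank_comap V
  rcases count A B x0 V hx0 hB hA hmin (Module.finrank ℝ V + m) with h | h
  · exact le_antisymm hle h
  · exact Submodule.eq_of_le_of_finrank_le hle (by rw [hfr]; exact h)

end WithV
end Constr

section Spectral
variable {k : ℕ}

/-- coercion of a real vector to a complex vector -/
def cv (v : Fin k → ℝ) : Fin k → ℂ := fun i => (v i : ℂ)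

lemma mulVec_map_coe (M : Matrix (Fin k) (Fin k) ℝ) (v : Fin k → ℝ) :
    (M.map ((↑·) : ℝ → ℂ)) *ᵥ (cv v) = cv (M *ᵥ v) := by
  funext i
  simp only [Matrix.mulVec, dotProduct, Matrix.map_apply, cv]
  push_cast
  rfl

lemma cv_decomp (z : Fin k → ℂ) :
    z = cv (fun i => (z i).re) + Complex.I • cv (fun i => (z i).im) := by
  funext i
  simp only [cv, Pi.add_apply, Pi.smul_apply, smul_eq_mul]
  rw [mul_comm]
  exact (Complex.re_add_im (z i)).symm

section TransferSetup
variable (V : Submodule ℝ (Fin k → ℝ))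

/-- complexification of `V` -/
noncomputable def Vc : Submodule ℂ (Fin k → ℂ) := Submodule.span ℂ (cv '' (V : Set (Fin k → ℝ)))

lemma cv_mem_Vc {v : Fin k → ℝ} (hv : v ∈ V) : cv v ∈ Vc V :=
  Submodule.subset_span ⟨v, hv, rfl⟩

lemma inv_transfer (Q : Matrix (Fin k) (Fin k) ℝ) (hQ : ∀ v ∈ V, Q *ᵥ v ∈ V) :
    ∀ z ∈ Vc V, (Q.map ((↑·) : ℝ → ℂ)) *ᵥ z ∈ Vc V := by
  intro z hz
  have hle : Vc V ≤ Submodule.comap ((Q.map ((↑·) : ℝ → ℂ)).mulVecLin) (Vc V) := by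
    apply Submodule.span_le.2
    rintro y ⟨v, hv, rfl⟩
    simp only [SetLike.mem_coe, Submodule.mem_comap, Matrix.mulVecLin_apply]
    rw [mulVec_map_coe]
    exact cv_mem_Vc V (hQ v hv)
  have := hle hz
  rwa [Submodule.mem_comap, Matrix.mulVecLin_apply] at this

lemma range_transfer (Q : Matrix (Fin k) (Fin k) ℝ) (hQ : ∀ w, Q *ᵥ w ∈ V) (z : Fin k → ℂ) :
    (Q.map ((↑·) : ℝ → ℂ)) *ᵥ z ∈ Vc V := by
  rw [cv_decomp z, Matrix.mulVec_add, Matrix.mulVec_smul, mulVec_map_coe, mulVec_map_coe]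
  exact add_mem (cv_mem_Vc V (hQ _)) (Submodule.smul_mem _ _ (cv_mem_Vc V (hQ _)))

lemma eq_transfer (Q R : Matrix (Fin k) (Fin k) ℝ) (hQR : ∀ v ∈ V, Q *ᵥ v = R *ᵥ v) :
    ∀ z ∈ Vc V, (Q.map ((↑·) : ℝ → ℂ)) *ᵥ z = (R.map ((↑·) : ℝ → ℂ)) *ᵥ z := by
  intro z hz
  have hle : Vc V ≤ LinearMap.ker ((Q.map ((↑·) : ℝ → ℂ)).mulVecLin
      - (R.map ((↑·) : ℝ → ℂ)).mulVecLin) := by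
    apply Submodule.span_le.2
    rintro y ⟨v, hv, rfl⟩
    simp only [SetLike.mem_coe, LinearMap.mem_ker, LinearMap.sub_apply,
      Matrix.mulVecLin_apply]
    rw [mulVec_map_coe, mulVec_map_coe, hQR v hv, sub_self]
  have := hle hz
  simp only [LinearMap.mem_ker, LinearMap.sub_apply, Matrix.mulVecLin_apply] at this
  exact sub_eq_zero.1 this

end TransferSetup

lemma alg_mulVec (μ : ℂ) (z : Fin k → ℂ) :
    (algebraMap ℂ (Matrix (Fin k) (Fin k) ℂ) μ) *ᵥ z = μ • z := by
  rw [Algebra.algebraMap_eq_smul_one, Matrix.smul_mulVec, Matrix.one_mulVec]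

lemma eig_of_mem_spectrum {M : Matrix (Fin k) (Fin k) ℂ} {μ : ℂ} (h : μ ∈ spectrum ℂ M) :
    ∃ z, z ≠ 0 ∧ M *ᵥ z = μ • z := by
  rw [spectrum.mem_iff] at h
  have hdet : (algebraMap ℂ (Matrix (Fin k) (Fin k) ℂ) μ - M).det = 0 := by
    by_contra hd
    exact h ((Matrix.isUnit_iff_isUnit_det _).2 (isUnit_iff_ne_zero.2 hd))
  obtain ⟨z, hz0, hz⟩ := (Matrix.exists_mulVec_eq_zero_iff).2 hdet
  refine ⟨z, hz0, ?_⟩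
  rw [Matrix.sub_mulVec, alg_mulVec] at hz
  exact (sub_eq_zero.1 hz).symm

lemma mem_spectrum_of_eig {M : Matrix (Fin k) (Fin k) ℂ} {μ : ℂ} {z : Fin k → ℂ}
    (hz0 : z ≠ 0) (hz : M *ᵥ z = μ • z) : μ ∈ spectrum ℂ M := by
  rw [spectrum.mem_iff]
  intro hU
  have hdet := (Matrix.isUnit_iff_isUnit_det _).1 hU
  have h0 : (algebraMap ℂ (Matrix (Fin k) (Fin k) ℂ) μ - M).det = 0 := by
    apply (Matrix.exists_mulVec_eq_zero_iff).1
    exact ⟨z, hz0, by rw [Matrix.sub_mulVec, alg_mulVec, hz, sub_self]⟩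
  rw [h0] at hdet
  exact (not_isUnit_zero : ¬ IsUnit (0 : ℂ)) hdet

lemma map_coe_sub (M N : Matrix (Fin k) (Fin k) ℝ) :
    (M - N).map ((↑·) : ℝ → ℂ) = M.map ((↑·) : ℝ → ℂ) - N.map ((↑·) : ℝ → ℂ) := by
  ext i j
  simp [Matrix.map_apply]

lemma schur_transfer (V : Submodule ℝ (Fin k → ℝ)) (M M0 N : Matrix (Fin k) (Fin k) ℝ)
    (hNV : ∀ v ∈ V, N *ᵥ v ∈ V)
    (hMM0 : ∀ v ∈ V, M *ᵥ v = M0 *ᵥ v)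
    (hMN : ∀ z : Fin k → ℝ, (M - N) *ᵥ z ∈ V)
    (hS0 : Schur M0) (hSN : Schur N) : Schur M := by
  intro μ hμ
  obtain ⟨z, hz0, hz⟩ := eig_of_mem_spectrum hμ
  by_cases hzV : z ∈ Vc V
  · apply hS0 μ
    apply mem_spectrum_of_eig hz0
    rw [← eq_transfer V M M0 hMM0 z hzV]
    exact hz
  · apply hSN μ
    rw [spectrum.mem_iff]
    intro hU
    set D := algebraMap ℂ (Matrix (Fin k) (Fin k) ℂ) μ - N.map ((↑·) : ℝ → ℂ) with hD
    have hdetD : IsUnit D.det := (Matrix.isUnit_iff_isUnit_det D).1 hU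
    have hinj : Function.Injective (D.mulVecLin) := by
      intro a b hab
      simp only [Matrix.mulVecLin_apply] at hab
      have h1 : D⁻¹ *ᵥ (D *ᵥ a) = D⁻¹ *ᵥ (D *ᵥ b) := by rw [hab]
      rwa [Matrix.mulVec_mulVec, Matrix.mulVec_mulVec, Matrix.nonsing_inv_mul D hdetD,
        Matrix.one_mulVec, Matrix.one_mulVec] at h1
    have hmaple : Submodule.map (D.mulVecLin) (Vc V) ≤ Vc V := by
      rintro _ ⟨w, hw, rfl⟩
      simp only [Matrix.mulVecLin_apply]
      rw [hD, Matrix.sub_mulVec, alg_mulVec]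
      exact sub_mem (Submodule.smul_mem _ _ hw) (inv_transfer V N hNV w hw)
    have hmapeq : Submodule.map (D.mulVecLin) (Vc V) = Vc V :=
      Submodule.eq_of_le_of_finrank_le hmaple
        (le_of_eq (LinearEquiv.finrank_eq (Submodule.equivMapOfInjective _ hinj (Vc V))))
    have hDz : D *ᵥ z ∈ Vc V := by
      have he : D *ᵥ z = ((M - N).map ((↑·) : ℝ → ℂ)) *ᵥ z := by
        rw [hD, Matrix.sub_mulVec, alg_mulVec, ← hz, map_coe_sub, Matrix.sub_mulVec]
      rw [he]
      exact range_transfer V (M - N) hMN z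
    rw [← hmapeq] at hDz
    obtain ⟨y, hy, hyz⟩ := hDz
    apply hzV
    have hyzz : y = z := by
      apply hinj
      simp only [Matrix.mulVecLin_apply]
      simpa using hyz
    rwa [← hyzz]

end Spectral
end Stmt18Aux


open Stmt18Aux in
theorem stmt_18' {n m : ℕ} (hn : 0 < n) (hm : 0 < m)
    (A : Matrix (Fin n) (Fin n) ℝ) (B : Matrix (Fin n) (Fin m) ℝ)
    (hstab : Stabilizable A B) (x0 : Fin n → ℝ) :
    ∃ (u : Fin (Module.finrank ℝ (Rspace A (augCol B x0)) + m) → Fin m → ℝ)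
      (x : Fin (Module.finrank ℝ (Rspace A (augCol B x0)) + m + 1) → Fin n → ℝ),
      Consistent A B u x ∧ x 0 = x0 ∧ InfStab (SigmaStab n m) u x := by
  set V : Submodule ℝ (Fin n → ℝ) := Rspace A (augCol B x0) with hV
  have hx0 : x0 ∈ V := x0_mem A B x0 hn
  have hB : ∀ u, B *ᵥ u ∈ V := B_mem A B x0 hn
  have hA : ∀ v ∈ V, A *ᵥ v ∈ V := A_mem A B x0 hn
  have hmin : ∀ U : Submodule ℝ (Fin n → ℝ), x0 ∈ U → (∀ u, B *ᵥ u ∈ U) →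
      (∀ v ∈ U, A *ᵥ v ∈ U) → V ≤ U := V_min A B x0 hn
  set T : ℕ := Module.finrank ℝ V + m with hT
  refine ⟨fun t => us A B x0 t.val, fun t => xs A B x0 t.val, ?_, ?_, ?_⟩
  · intro t
    show xs A B x0 t.succ.val = A *ᵥ xs A B x0 t.castSucc.val + B *ᵥ us A B x0 t.val
    rw [Fin.val_succ, Fin.coe_castSucc]
    exact xs_succ A B x0 t.val
  · show xs A B x0 (0 : Fin (T+1)).val = x0
    rw [Fin.val_zero]
    exact xs_zero A B x0
  · obtain ⟨K0, hK0⟩ := hstab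
    refine ⟨K0, ?_⟩
    rintro ⟨A', B'⟩ ⟨hd, hs⟩
    simp only [SigmaD, Set.mem_setOf_eq] at hd
    simp only [SigmaStab, Set.mem_setOf_eq] at hs
    have hspan : Scols A B x0 T = Submodule.comap prN V :=
      span_final A B x0 V hx0 hB hA hmin
    set L : ((Fin n ⊕ Fin m) → ℝ) →ₗ[ℝ] (Fin n → ℝ) :=
      (A' - A).mulVecLin ∘ₗ (prN (n := n) (m := m))
        + (B' - B).mulVecLin ∘ₗ (LinearMap.funLeft ℝ ℝ Sum.inr) with hLdef
    have hLapp : ∀ y : (Fin n ⊕ Fin m) → ℝ,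
        L y = (A' - A) *ᵥ (y ∘ Sum.inl) + (B' - B) *ᵥ (y ∘ Sum.inr) := by
      intro y
      simp only [hLdef, LinearMap.add_apply, LinearMap.coe_comp, Function.comp_apply,
        Matrix.mulVecLin_apply]
      rfl
    have hkill : ∀ s, s < T → L (colv A B x0 s) = 0 := by
      intro s hsT
      have h1 : xs A B x0 (s+1) = A' *ᵥ xs A B x0 s + B' *ᵥ us A B x0 s := by
        have hc := hd ⟨s, hsT⟩
        simpa [Fin.val_succ, Fin.coe_castSucc] using hc
      have h2 := xs_succ A B x0 s
      rw [hLapp, colv, Sum.elim_comp_inl, Sum.elim_comp_inr, Matrix.sub_mulVec,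
        Matrix.sub_mulVec]
      have : A' *ᵥ xs A B x0 s - A *ᵥ xs A B x0 s
          + (B' *ᵥ us A B x0 s - B *ᵥ us A B x0 s)
          = (A' *ᵥ xs A B x0 s + B' *ᵥ us A B x0 s)
            - (A *ᵥ xs A B x0 s + B *ᵥ us A B x0 s) := by abel
      rw [this, ← h1, ← h2, sub_self]
    have hker : Submodule.comap (prN (n := n) (m := m)) V ≤ LinearMap.ker L := by
      rw [← hspan, Scols]
      apply Submodule.span_le.2
      rintro y ⟨s, hsT, rfl⟩
      simp only [SetLike.mem_coe, LinearMap.mem_ker]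
      exact hkill s (Set.mem_Iio.1 hsT)
    have hAeq : ∀ v ∈ V, A' *ᵥ v = A *ᵥ v := by
      intro v hv
      have hm1 : (Sum.elim v (0 : Fin m → ℝ)) ∈ Submodule.comap (prN (n := n) (m := m)) V := by
        rw [Submodule.mem_comap]
        have : prN (Sum.elim v (0 : Fin m → ℝ)) = v := by funext i; rfl
        rw [this]
        exact hv
      have h0 := LinearMap.mem_ker.1 (hker hm1)
      rw [hLapp, Sum.elim_comp_inl, Sum.elim_comp_inr, Matrix.mulVec_zero, add_zero,
        Matrix.sub_mulVec] at h0
      exact sub_eq_zero.1 h0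
    have hBeq : B' = B := by
      have hw : ∀ w : Fin m → ℝ, (B' - B) *ᵥ w = 0 := by
        intro w
        have hm1 : (Sum.elim (0 : Fin n → ℝ) w) ∈ Submodule.comap (prN (n := n) (m := m)) V := by
          rw [Submodule.mem_comap]
          have : prN (Sum.elim (0 : Fin n → ℝ) w) = 0 := by funext i; rfl
          rw [this]
          exact zero_mem V
        have h0 := LinearMap.mem_ker.1 (hker hm1)
        rwa [hLapp, Sum.elim_comp_inl, Sum.elim_comp_inr, Matrix.mulVec_zero, zero_add] at h0
      have hsub : B' - B = 0 := by
        ext i j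
        have hcf := congrFun (hw (Pi.single j 1)) i
        simp only [Matrix.mulVec, dotProduct, Pi.single_apply, mul_ite, mul_one,
          mul_zero, Finset.sum_ite_eq', Finset.mem_univ, if_true, Pi.zero_apply] at hcf
        simpa using hcf
      have := sub_eq_zero.1 hsub
      exact this
    obtain ⟨K2, hK2⟩ := hs
    rw [hBeq] at hK2
    show Schur (A' + B' * K0)
    rw [hBeq]
    apply schur_transfer V (A' + B * K0) (A + B * K0) (A' + B * K2)
    · intro v hv
      rw [Matrix.add_mulVec, ← Matrix.mulVec_mulVec]
      rw [hAeq v hv]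
      exact add_mem (hA v hv) (hB _)
    · intro v hv
      rw [Matrix.add_mulVec, Matrix.add_mulVec, hAeq v hv]
    · intro z
      have he : (A' + B * K0) - (A' + B * K2) = B * K0 - B * K2 := by abel
      rw [he, Matrix.sub_mulVec, ← Matrix.mulVec_mulVec, ← Matrix.mulVec_mulVec]
      exact sub_mem (hB _) (hB _)
    · exact hK0
    · exact hK2


/-- For a stabilizable `(A,B)` and any initial state `x₀`, there exists
data of length `T = dim R(A,[B x₀]) + m` consistent with `(A,B)`, starting at `x₀`,
that is `Σ_stab`-informative for stabilization. -/
theorem stmt_18 {n m : ℕ} (hn : 0 < n) (hm : 0 < m)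
    (A : Matrix (Fin n) (Fin n) ℝ) (B : Matrix (Fin n) (Fin m) ℝ)
    (hstab : Stabilizable A B) (x0 : Fin n → ℝ) :
    ∃ (u : Fin (Module.finrank ℝ (Rspace A (augCol B x0)) + m) → Fin m → ℝ)
      (x : Fin (Module.finrank ℝ (Rspace A (augCol B x0)) + m + 1) → Fin n → ℝ),
      Consistent A B u x ∧ x 0 = x0 ∧ InfStab (SigmaStab n m) u x := by
  exact stmt_18' hn hm A B hstab x0
end
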